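/- arXiv:1212.6334 — 4 statements merged into one kernel-verified Lean document; each statement's English description precedes it below -/
import Mathlib

section
/- Let I = [2^{-k}ℓ₁, 2^{-k}(ℓ₁+1)) and J = [2^{-k}ℓ₂, 2^{-k}(ℓ₂+1)) be dyadic intervals of equal length 2^{-k}, let n be a nonnegative integer, and define I ⊕ J := [2^{-k}(ℓ₁⊕ℓ₂), 2^{-k}(ℓ₁⊕ℓ₂+1)). Then for almost all x ∈ I and y ∈ J one has w_{I,n}(x) · w_{J,n}(y) = w_{I⊕J, n}(x ⊕ y), where x ⊕ y is the bitwise XOR of the binary expansions of x and y. -/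
open MeasureTheory Filter

/-- The `j`-th binary digit of a nonnegative real number `x`. -/
noncomputable def bdigit (x : ℝ) (j : ℤ) : ℕ := (Int.toNat ⌊x / 2 ^ j⌋) % 2

/-- Binary digitwise addition (XOR) of nonnegative reals. -/
noncomputable def dxor (x y : ℝ) : ℝ :=
  ∑' j : ℤ, (((bdigit x j + bdigit y j) % 2 : ℕ) : ℝ) * 2 ^ j

/-- The dyadic interval `[2^{-k} l, 2^{-k} (l+1))`. -/
def dyadicI (k : ℤ) (l : ℕ) : Set ℝ :=
  Set.Ico ((2 : ℝ) ^ (-k) * l) ((2 : ℝ) ^ (-k) * (l + 1))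

/-- The L^∞-normalized Walsh wave packet `w_{I,n}` for `I = [2^{-k} l, 2^{-k}(l+1))`. -/
noncomputable def walsh (k : ℤ) (l n : ℕ) (x : ℝ) : ℝ :=
  Set.indicator (dyadicI k l)
    (fun x => (-1 : ℝ) ^ (∑ j ∈ Finset.range (n + 1),
      (Nat.testBit n j).toNat * bdigit x (-(j : ℤ) - k - 1))) x

/-- The Walsh–Fourier average `[f]_{I,n} = |I|^{-1} ∫_I f w_{I,n}`. -/
noncomputable def avg (k : ℤ) (l n : ℕ) (f : ℝ → ℝ) : ℝ :=
  (2 : ℝ) ^ k * ∫ x in dyadicI k l, f x * walsh k l n x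

/-- A real-valued dyadic step function supported on `[0,1)²`. -/
def IsDyadicStep (F : ℝ → ℝ → ℝ) : Prop :=
  ∃ (s : Finset ((ℤ × ℕ) × (ℤ × ℕ))) (c : (ℤ × ℕ) × (ℤ × ℕ) → ℝ),
    (∀ p ∈ s, dyadicI p.1.1 p.1.2 ⊆ Set.Ico (0 : ℝ) 1 ∧
      dyadicI p.2.1 p.2.2 ⊆ Set.Ico (0 : ℝ) 1) ∧
    ∀ x y : ℝ, F x y = ∑ p ∈ s, c p * Set.indicator (dyadicI p.1.1 p.1.2) 1 x *
      Set.indicator (dyadicI p.2.1 p.2.2) 1 y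

/-- `F` is constant on dyadic squares with sides of length `2^{-M}`. -/
def ConstOnSquares (M : ℕ) (F : ℝ → ℝ → ℝ) : Prop :=
  ∀ l₁ l₂ : ℕ, ∀ x ∈ dyadicI (M : ℤ) l₁, ∀ x' ∈ dyadicI (M : ℤ) l₁,
    ∀ y ∈ dyadicI (M : ℤ) l₂, ∀ y' ∈ dyadicI (M : ℤ) l₂, F x y = F x' y'

lemma floor_div_nat' (a : ℝ) (n : ℕ) (hn : 0 < n) : ⌊a / (n : ℝ)⌋ = ⌊a⌋ / (n : ℤ) := by
  have hn' : (0:ℝ) < (n:ℝ) := by exact_mod_cast hn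
  set q : ℤ := ⌊a⌋ / (n:ℤ) with hq
  set r : ℤ := ⌊a⌋ % (n:ℤ) with hr
  have hmod : 0 ≤ r := Int.emod_nonneg ⌊a⌋ (by exact_mod_cast hn.ne' : (n:ℤ) ≠ 0)
  have hlt : r < n := Int.emod_lt_of_pos ⌊a⌋ (by exact_mod_cast hn : (0:ℤ) < n)
  have hdm : (n:ℤ) * q + r = ⌊a⌋ := Int.mul_ediv_add_emod ⌊a⌋ (n:ℤ)
  have hfl : (⌊a⌋ : ℝ) = (n:ℝ) * (q:ℝ) + (r:ℝ) := by exact_mod_cast hdm.symm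
  have h1 : (⌊a⌋:ℝ) ≤ a := Int.floor_le a
  have h2 : a < (⌊a⌋:ℝ) + 1 := Int.lt_floor_add_one a
  have hr1 : (0:ℝ) ≤ (r:ℝ) := by exact_mod_cast hmod
  have hr2 : (r:ℝ) + 1 ≤ (n:ℝ) := by exact_mod_cast hlt
  rw [Int.floor_eq_iff]
  constructor
  · rw [le_div_iff₀ hn']; push_cast; nlinarith
  · rw [div_lt_iff₀ hn']; push_cast; nlinarith


lemma floor_succ (y : ℝ) (j : ℤ) : ⌊y / 2 ^ (j+1)⌋ = ⌊y / 2 ^ j⌋ / 2 := by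
  have h : y / 2 ^ (j+1) = (y / 2 ^ j) / ((2:ℕ):ℝ) := by
    rw [zpow_add_one₀ (by norm_num : (2:ℝ) ≠ 0)]
    push_cast; ring
  rw [h, floor_div_nat' _ 2 (by norm_num)]
  norm_num

lemma bdigit_int (y : ℝ) (hy : 0 ≤ y) (j : ℤ) : (bdigit y j : ℤ) = ⌊y / 2 ^ j⌋ % 2 := by
  have h0 : 0 ≤ ⌊y / 2 ^ j⌋ := Int.floor_nonneg.2 (by positivity)
  unfold bdigit
  omega

lemma digit_identity (y : ℝ) (hy : 0 ≤ y) (j : ℤ) :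
    (bdigit y j : ℝ) * 2 ^ j = 2 ^ j * ⌊y / 2 ^ j⌋ - 2 ^ (j+1) * ⌊y / 2 ^ (j+1)⌋ := by
  have h1 : (bdigit y j : ℤ) = ⌊y / 2 ^ j⌋ - 2 * ⌊y / 2 ^ (j+1)⌋ := by
    rw [bdigit_int y hy j, floor_succ y j]; omega
  have h1' : (bdigit y j : ℝ) = (⌊y / 2 ^ j⌋ : ℝ) - 2 * (⌊y / 2 ^ (j+1)⌋ : ℝ) := by
    exact_mod_cast h1
  rw [h1', zpow_add_one₀ (by norm_num : (2:ℝ) ≠ 0)]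
  ring

lemma tendsto_floor_scale (y : ℝ) (p : ℤ) :
    Tendsto (fun i : ℕ => (2:ℝ) ^ (p - i) * ⌊y / 2 ^ (p - i)⌋) atTop (nhds y) := by
  have hbound : ∀ i : ℕ, y - 2 ^ (p - i) < (2:ℝ) ^ (p - i) * ⌊y / 2 ^ (p - i)⌋ ∧
      (2:ℝ) ^ (p - i) * ⌊y / 2 ^ (p - i)⌋ ≤ y := by
    intro i
    have hp : (0:ℝ) < 2 ^ (p - (i:ℤ)) := by positivity
    have h1 : (⌊y / 2 ^ (p - (i:ℤ))⌋ : ℝ) ≤ y / 2 ^ (p - (i:ℤ)) := Int.floor_le _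
    have h2 : y / 2 ^ (p - (i:ℤ)) - 1 < ⌊y / 2 ^ (p - (i:ℤ))⌋ := Int.sub_one_lt_floor _
    constructor
    · have := (mul_lt_mul_iff_right₀ hp).2 h2
      rw [mul_sub, mul_div_cancel₀ _ hp.ne'] at this
      linarith
    · have := (mul_le_mul_iff_right₀ hp).2 h1
      rwa [mul_div_cancel₀ _ hp.ne'] at this
  have htend : Tendsto (fun i : ℕ => (2:ℝ) ^ (p - (i:ℤ))) atTop (nhds 0) := by
    have : ∀ i : ℕ, (2:ℝ) ^ (p - (i:ℤ)) = 2 ^ p * (2⁻¹ : ℝ) ^ i := by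
      intro i
      rw [zpow_sub₀ (by norm_num : (2:ℝ) ≠ 0), zpow_natCast, div_eq_mul_inv, inv_pow]
    simp only [this]
    rw [show (0:ℝ) = 2 ^ p * 0 by ring]
    exact (tendsto_pow_atTop_nhds_zero_of_lt_one (by norm_num) (by norm_num)).const_mul _
  apply tendsto_of_tendsto_of_tendsto_of_le_of_le (g := fun i : ℕ => y - 2 ^ (p - (i:ℤ)))
      (h := fun _ : ℕ => y)
  · have : Tendsto (fun i : ℕ => y - 2 ^ (p - (i:ℤ))) atTop (nhds (y - 0)) :=
      tendsto_const_nhds.sub htend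
    simpa using this
  · exact tendsto_const_nhds
  · exact fun i => (hbound i).1.le
  · exact fun i => (hbound i).2

lemma hasSum_digits (y : ℝ) (hy : 0 ≤ y) (p : ℤ) :
    HasSum (fun i : ℕ => (bdigit y (p - 1 - i) : ℝ) * 2 ^ (p - 1 - i))
      (y - 2 ^ p * ⌊y / 2 ^ p⌋) := by
  set f : ℕ → ℝ := fun i => (bdigit y (p - 1 - i) : ℝ) * 2 ^ (p - 1 - i) with hf
  have hpart : ∀ N : ℕ, ∑ i ∈ Finset.range N, f i =
      2 ^ (p - N) * ⌊y / 2 ^ (p - N)⌋ - 2 ^ p * ⌊y / 2 ^ p⌋ := by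
    intro N
    induction N with
    | zero => simp
    | succ N ih =>
      rw [Finset.sum_range_succ, ih]
      have hterm : f N = 2 ^ (p - 1 - (N:ℤ)) * ⌊y / 2 ^ (p - 1 - (N:ℤ))⌋
          - 2 ^ (p - (N:ℤ)) * ⌊y / 2 ^ (p - (N:ℤ))⌋ := by
        have h := digit_identity y hy (p - 1 - (N:ℤ))
        have e1 : p - 1 - (N:ℤ) + 1 = p - (N:ℤ) := by ring
        rw [e1] at h
        exact h
      rw [hterm, show p - (((N+1:ℕ)):ℤ) = p - 1 - (N:ℤ) from by push_cast; ring]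
      ring
  have hnn : ∀ i, 0 ≤ f i := fun i => by positivity
  have hle : ∀ N, ∑ i ∈ Finset.range N, f i ≤ y - 2 ^ p * ⌊y / 2 ^ p⌋ := by
    intro N
    rw [hpart N]
    have h1 : (2:ℝ) ^ (p - (N:ℤ)) * ⌊y / 2 ^ (p - (N:ℤ))⌋ ≤ y := by
      have hp : (0:ℝ) < 2 ^ (p - (N:ℤ)) := by positivity
      have := (mul_le_mul_iff_right₀ hp).2 (Int.floor_le (y / 2 ^ (p - (N:ℤ))))
      rwa [mul_div_cancel₀ _ hp.ne'] at this
    linarith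
  have hsummable := summable_of_sum_range_le hnn hle
  have htends := hsummable.hasSum.tendsto_sum_nat
  have htends2 : Tendsto (fun N : ℕ => ∑ i ∈ Finset.range N, f i) atTop
      (nhds (y - 2 ^ p * ⌊y / 2 ^ p⌋)) := by
    simp only [hpart]
    have := (tendsto_floor_scale y p).sub (tendsto_const_nhds
      (x := (2:ℝ) ^ p * ⌊y / 2 ^ p⌋) (f := atTop))
    exact this
  exact (tendsto_nhds_unique htends htends2) ▸ hsummable.hasSum


lemma nat_xor_digit (a b s : ℕ) :
    (a / 2 ^ s % 2 + b / 2 ^ s % 2) % 2 = (a ^^^ b) / 2 ^ s % 2 := by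
  have ha := Nat.testBit_eq_decide_div_mod_eq (x := a) (i := s)
  have hb := Nat.testBit_eq_decide_div_mod_eq (x := b) (i := s)
  have hc := Nat.testBit_eq_decide_div_mod_eq (x := a ^^^ b) (i := s)
  have hx := Nat.testBit_xor a b s
  rw [ha, hb, hc] at hx
  have h1 : a / 2 ^ s % 2 = 0 ∨ a / 2 ^ s % 2 = 1 := by omega
  have h2 : b / 2 ^ s % 2 = 0 ∨ b / 2 ^ s % 2 = 1 := by omega
  have h3 : (a ^^^ b) / 2 ^ s % 2 = 0 ∨ (a ^^^ b) / 2 ^ s % 2 = 1 := by omega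
  rcases h1 with h1 | h1 <;> rcases h2 with h2 | h2 <;> rcases h3 with h3 | h3 <;>
    rw [h1, h2, h3] at hx ⊢ <;> simp_all

lemma nat_bits_sum (m t : ℕ) :
    ∑ i ∈ Finset.range t, m / 2 ^ i % 2 * 2 ^ i = m % 2 ^ t := by
  induction t with
  | zero => simp [Nat.mod_one]
  | succ t ih =>
    rw [Finset.sum_range_succ, ih]
    have key : m % 2 ^ (t + 1) = m % 2 ^ t + m / 2 ^ t % 2 * 2 ^ t := by
      set q := m / 2 ^ t with hq
      set r := m % 2 ^ t with hr
      have hdm : 2 ^ t * q + r = m := Nat.div_add_mod m (2 ^ t)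
      have hrlt : r < 2 ^ t := Nat.mod_lt _ (by positivity)
      have hq2 : q = 2 * (q / 2) + q % 2 := (Nat.div_add_mod q 2).symm
      have hm : m = 2 ^ (t + 1) * (q / 2) + (q % 2 * 2 ^ t + r) := by
        rw [pow_succ]; nlinarith [hdm, hq2]
      rw [hm, Nat.mul_add_mod]
      have hlt : q % 2 * 2 ^ t + r < 2 ^ (t + 1) := by
        have : q % 2 ≤ 1 := by omega
        rw [pow_succ]; nlinarith
      rw [Nat.mod_eq_of_lt hlt]
      ring
    omega

lemma floor_scale_of_mem {k : ℤ} {l : ℕ} {x : ℝ} (hx : x ∈ dyadicI k l) :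
    ⌊x * 2 ^ k⌋ = l := by
  obtain ⟨h1, h2⟩ := hx
  have hp : (0:ℝ) < 2 ^ (-k) := by positivity
  have hpk : (0:ℝ) < (2:ℝ) ^ k := by positivity
  have hprod : (2:ℝ) ^ (-k) * 2 ^ k = 1 := by
    rw [← zpow_add₀ (by norm_num : (2:ℝ) ≠ 0)]; norm_num
  rw [Int.floor_eq_iff]
  constructor
  · calc ((l:ℝ)) = (2 ^ (-k) * l) * 2 ^ k := by rw [mul_comm ((2:ℝ)^(-k)) (l:ℝ), mul_assoc, hprod]; ring
      _ ≤ x * 2 ^ k := by exact mul_le_mul_of_nonneg_right h1 hpk.le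
  · calc x * 2 ^ k < (2 ^ (-k) * (l + 1)) * 2 ^ k := mul_lt_mul_of_pos_right h2 hpk
      _ = l + 1 := by rw [mul_comm ((2:ℝ)^(-k)) ((l:ℝ)+1), mul_assoc, hprod]; ring

lemma bdigit_of_mem {k : ℤ} {l : ℕ} {x : ℝ} (hx : x ∈ dyadicI k l) {j : ℤ} (hj : -k ≤ j) :
    bdigit x j = l / 2 ^ (j + k).toNat % 2 := by
  set s : ℕ := (j + k).toNat with hs
  have hdiv : x / 2 ^ j = (x * 2 ^ k) / ((2 ^ s : ℕ) : ℝ) := by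
    have h2 : (2:ℝ) ^ j * ((2:ℝ) ^ s)⁻¹ * 2 ^ s = 2 ^ j := by
      field_simp
    have hpow : ((2:ℝ) ^ s) = 2 ^ (j + k) := by
      rw [← zpow_natCast (2:ℝ) s, hs]
      congr 1
      omega
    push_cast
    rw [div_eq_mul_inv, div_eq_mul_inv, hpow, zpow_add₀ (by norm_num : (2:ℝ) ≠ 0)]
    rw [mul_inv]
    field_simp
  have hfl : ⌊x / 2 ^ j⌋ = ((l / 2 ^ s : ℕ) : ℤ) := by
    rw [hdiv, floor_div_nat' _ _ (by positivity : 0 < 2 ^ s), floor_scale_of_mem hx]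
    exact (Int.natCast_ediv _ _).symm
  unfold bdigit
  rw [hfl]
  simp only [Int.toNat_natCast]


lemma countable_fixed_digits (p : ℤ) (a : ℤ → ℕ) :
    Set.Countable {y : ℝ | 0 ≤ y ∧ ∀ j < p, bdigit y j = a j} := by
  set S := {y : ℝ | 0 ≤ y ∧ ∀ j < p, bdigit y j = a j} with hS
  apply Set.countable_of_injective_of_countable_image
    (f := fun y => ⌊y / 2 ^ p⌋) ?_ (Set.to_countable _)
  intro y hy y' hy' hfe
  simp only at hfe
  simp only [hS, Set.mem_setOf_eq] at hy hy'
  have e1 := (hasSum_digits y hy.1 p).tsum_eq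
  have e2 := (hasSum_digits y' hy'.1 p).tsum_eq
  have hdig : ∀ i : ℕ, bdigit y (p - 1 - i) = bdigit y' (p - 1 - i) := by
    intro i
    rw [hy.2 _ (by omega), hy'.2 _ (by omega)]
  have : (∑' i : ℕ, (bdigit y (p - 1 - i) : ℝ) * 2 ^ (p - 1 - i))
      = ∑' i : ℕ, (bdigit y' (p - 1 - i) : ℝ) * 2 ^ (p - 1 - i) := by
    congr 1; funext i; rw [hdig i]
  have : y - 2 ^ p * ⌊y / 2 ^ p⌋ = y' - 2 ^ p * ⌊y' / 2 ^ p⌋ := by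
    rw [← e1, ← e2, this]
  rw [hfe] at this
  linarith [this]

lemma abstract_summable (c : ℤ → ℕ) (hc1 : ∀ j, c j ≤ 1) (B : ℤ)
    (hcB : ∀ j, B ≤ j → c j = 0) : Summable (fun j : ℤ => (c j : ℝ) * 2 ^ j) := by
  set f : ℤ → ℝ := fun j => (c j : ℝ) * 2 ^ j with hf
  have hg : Function.Injective (fun i : ℕ => B - 1 - (i : ℤ)) := by
    intro i i' h; simp only at h; omega
  have hvan : ∀ j ∉ Set.range (fun i : ℕ => B - 1 - (i : ℤ)), f j = 0 := by
    intro j hj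
    have hjB : B ≤ j := by
      by_contra hlt
      exact hj ⟨(B - 1 - j).toNat, by simp only; omega⟩
    simp [hf, hcB j hjB]
  rw [← Function.Injective.summable_iff hg hvan]
  refine Summable.of_nonneg_of_le (f := fun i : ℕ => (2:ℝ) ^ (B - 1) * (2⁻¹ : ℝ) ^ i)
    (fun i => by simp only [Function.comp, hf]; positivity) (fun i => ?_)
    ((summable_geometric_of_lt_one (r := (2⁻¹:ℝ)) (by norm_num) (by norm_num)).mul_left _)
  · 
    have h1 : (c (B - 1 - (i:ℤ)) : ℝ) ≤ 1 := by exact_mod_cast hc1 _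
    have h2 : (2:ℝ) ^ (B - 1 - (i:ℤ)) = 2 ^ (B - 1) * (2⁻¹:ℝ) ^ i := by
      rw [zpow_sub₀ (by norm_num : (2:ℝ) ≠ 0), zpow_natCast, div_eq_mul_inv, inv_pow]
    show (c (B - 1 - (i:ℤ)) : ℝ) * 2 ^ (B - 1 - (i:ℤ)) ≤ _
    rw [h2]
    show (c (B - 1 - (i:ℤ)) : ℝ) * (2 ^ (B - 1) * 2⁻¹ ^ i) ≤ 2 ^ (B - 1) * 2⁻¹ ^ i
    exact mul_le_of_le_one_left (by positivity) h1


lemma abstract_decomp (c : ℤ → ℕ) (hc1 : ∀ j, c j ≤ 1) (B : ℤ)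
    (hcB : ∀ j, B ≤ j → c j = 0) (p : ℤ) (hpB : p ≤ B)
    (j₀ : ℤ) (hj₀ : j₀ < p) (hcj₀ : c j₀ = 0) :
    ∃ T : ℝ, 0 ≤ T ∧ T < 2 ^ p ∧
      (∑' j : ℤ, (c j : ℝ) * 2 ^ j) =
        2 ^ p * ((∑ i ∈ Finset.range (B - p).toNat, c (p + i) * 2 ^ i : ℕ) : ℝ) + T := by
  classical
  set f : ℤ → ℝ := fun j => (c j : ℝ) * 2 ^ j with hfdef
  have hnnf : ∀ j, 0 ≤ f j := fun j => by simp only [hfdef]; positivity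
  have hsum : Summable f := abstract_summable c hc1 B hcB
  set f1 : ℤ → ℝ := fun j => if p ≤ j then f j else 0 with hf1
  set f2 : ℤ → ℝ := fun j => if j < p then f j else 0 with hf2
  have hfsplit : ∀ j, f j = f1 j + f2 j := by
    intro j; simp only [hf1, hf2]
    by_cases h : p ≤ j
    · rw [if_pos h, if_neg (by omega)]; ring
    · rw [if_neg h, if_pos (by omega)]; ring
  have hs1 : Summable f1 := by
    refine Summable.of_nonneg_of_le (fun j => ?_) (fun j => ?_) hsum
    · simp only [hf1]; split; exacts [hnnf j, le_rfl]
    · simp only [hf1]; split; exacts [le_rfl, hnnf j]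
  have hs2 : Summable f2 := by
    refine Summable.of_nonneg_of_le (fun j => ?_) (fun j => ?_) hsum
    · simp only [hf2]; split; exacts [hnnf j, le_rfl]
    · simp only [hf2]; split; exacts [le_rfl, hnnf j]
  have hsplit_tsum : ∑' j, f j = ∑' j, f1 j + ∑' j, f2 j := by
    rw [← Summable.tsum_add hs1 hs2]
    exact tsum_congr hfsplit
  have hg1 : Function.Injective (fun i : ℕ => p + (i : ℤ)) := fun i i' h => by
    simp only at h; omega
  have hsupp1 : Function.support f1 ⊆ Set.range (fun i : ℕ => p + (i : ℤ)) := by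
    intro j hj
    simp only [Function.mem_support, hf1] at hj
    have hpj : p ≤ j := by by_contra h; rw [if_neg h] at hj; exact hj rfl
    exact ⟨(j - p).toNat, by simp only; omega⟩
  have h1eval : ∑' j, f1 j
      = 2 ^ p * ((∑ i ∈ Finset.range (B - p).toNat, c (p + i) * 2 ^ i : ℕ) : ℝ) := by
    rw [← Function.Injective.tsum_eq hg1 hsupp1]
    have hvan : ∀ i : ℕ, i ∉ Finset.range (B - p).toNat → f1 (p + (i:ℤ)) = 0 := by
      intro i hi
      simp only [Finset.mem_range] at hi
      have hB : B ≤ p + (i:ℤ) := by omega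
      simp [hf1, hfdef, hcB _ hB]
    rw [tsum_eq_sum hvan]
    push_cast
    rw [Finset.mul_sum]
    apply Finset.sum_congr rfl
    intro i _
    simp only [hf1, if_pos (by omega : p ≤ p + (i:ℤ)), hfdef]
    rw [zpow_add₀ (by norm_num : (2:ℝ) ≠ 0), zpow_natCast]
    ring
  set T := ∑' j, f2 j with hT
  have hTnn : 0 ≤ T := tsum_nonneg (fun j => by simp only [hf2]; split; exacts [hnnf _, le_rfl])
  have hg2 : Function.Injective (fun i : ℕ => p - 1 - (i : ℤ)) := fun i i' h => by
    simp only at h; omega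
  have hsupp2 : Function.support f2 ⊆ Set.range (fun i : ℕ => p - 1 - (i : ℤ)) := by
    intro j hj
    simp only [Function.mem_support, hf2] at hj
    have hpj : j < p := by by_contra h; rw [if_neg h] at hj; exact hj rfl
    exact ⟨(p - 1 - j).toNat, by simp only; omega⟩
  set i₀ : ℕ := (p - 1 - j₀).toNat with hi₀
  have hi₀j : p - 1 - (i₀ : ℤ) = j₀ := by omega
  set H : ℕ → ℝ := fun i => (2:ℝ) ^ (p - 1 - (i:ℤ)) with hH
  have hHgeom : ∀ i : ℕ, H i = 2 ^ (p-1) * (2⁻¹:ℝ) ^ i := by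
    intro i
    simp only [hH]
    rw [zpow_sub₀ (by norm_num : (2:ℝ) ≠ 0), zpow_natCast, div_eq_mul_inv, inv_pow]
  have hHsum : Summable H := by
    apply Summable.congr ((summable_geometric_of_lt_one (r := (2⁻¹:ℝ)) (by norm_num)
      (by norm_num)).mul_left ((2:ℝ) ^ (p-1)))
    intro i; rw [hHgeom i]
  have hHval : ∑' i, H i = 2 ^ p := by
    rw [tsum_congr hHgeom, tsum_mul_left, tsum_geometric_of_lt_one (by norm_num) (by norm_num),
      zpow_sub₀ (by norm_num : (2:ℝ) ≠ 0)]
    norm_num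
  set h : ℕ → ℝ := fun i => if i = i₀ then 0 else H i with hh
  have hHnn : ∀ i, 0 ≤ H i := fun i => by rw [hHgeom i]; positivity
  have hhsum : Summable h := by
    refine Summable.of_nonneg_of_le (fun i => ?_) (fun i => ?_) hHsum
    · simp only [hh]; split; exacts [le_rfl, hHnn i]
    · simp only [hh]; split; exacts [hHnn i, le_rfl]
  have hhval : ∑' i, h i = 2 ^ p - 2 ^ j₀ := by
    have heq := Summable.tsum_eq_add_tsum_ite hHsum i₀
    rw [hHval] at heq
    have hHi₀ : H i₀ = 2 ^ j₀ := by simp only [hH]; rw [hi₀j]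
    have : ∑' (n : ℕ), (if n = i₀ then 0 else H n) = 2 ^ p - H i₀ := by linarith
    rw [hHi₀] at this
    simpa only [hh] using this
  have hsupp2' : ∀ x ∉ Set.range (fun i : ℕ => p - 1 - (i : ℤ)), f2 x = 0 :=
    Function.support_subset_iff'.mp hsupp2
  have hTle : T ≤ ∑' i, h i := by
    rw [hT, ← Function.Injective.tsum_eq hg2 hsupp2]
    refine Summable.tsum_le_tsum (fun i => ?_)
      ((Function.Injective.summable_iff hg2 hsupp2').mpr hs2) hhsum
    show f2 (p - 1 - (i:ℤ)) ≤ h i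
    by_cases hii : i = i₀
    · subst hii
      have e1 : f2 (p - 1 - (i₀:ℤ)) = 0 := by
        rw [hi₀j]; simp only [hf2, hfdef]
        split <;> simp [hcj₀]
      rw [e1]
      simp only [hh]
      split
      · exact le_rfl
      · exact hHnn _
    · have e2 : h i = H i := by simp only [hh, if_neg hii]
      rw [e2]
      simp only [hf2, hH]
      split
      · simp only [hfdef]
        have h1 : (c (p - 1 - (i:ℤ)) : ℝ) ≤ 1 := by exact_mod_cast hc1 _
        have h2 := mul_le_mul_of_nonneg_right h1
          (le_of_lt (zpow_pos (by norm_num : (0:ℝ) < 2) (p - 1 - (i:ℤ))))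
        rw [one_mul] at h2
        exact h2
      · positivity
  have hTlt : T < 2 ^ p := by
    have : (0:ℝ) < 2 ^ j₀ := by positivity
    calc T ≤ 2 ^ p - 2 ^ j₀ := hhval ▸ hTle
      _ < 2 ^ p := by linarith
  refine ⟨T, hTnn, hTlt, ?_⟩
  show ∑' j, f j = _
  rw [hsplit_tsum, h1eval]


def badSet (p : ℤ) : Set (ℝ × ℝ) :=
  {z | 0 ≤ z.1 ∧ 0 ≤ z.2 ∧ ∀ j < p, bdigit z.1 j ≠ bdigit z.2 j}

lemma measurable_bdigit (j : ℤ) : Measurable (fun x : ℝ => bdigit x j) := by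
  have h1 : Measurable (fun x : ℝ => ⌊x / 2 ^ j⌋) :=
    Int.measurable_floor.comp (measurable_id.div_const _)
  exact Measurable.comp (f := fun x : ℝ => ⌊x / 2 ^ j⌋)
    (g := fun n : ℤ => n.toNat % 2) (measurable_from_top) h1

lemma measurableSet_badSet (p : ℤ) : MeasurableSet (badSet p) := by
  have hjm : ∀ j : ℤ, MeasurableSet {z : ℝ × ℝ | bdigit z.1 j = bdigit z.2 j} := by
    intro j
    have he : {z : ℝ × ℝ | bdigit z.1 j = bdigit z.2 j} =
        ⋃ m : ℕ, ((fun z : ℝ × ℝ => bdigit z.1 j) ⁻¹' {m} ∩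
          (fun z : ℝ × ℝ => bdigit z.2 j) ⁻¹' {m}) := by
      ext z
      simp only [Set.mem_setOf_eq, Set.mem_iUnion, Set.mem_inter_iff, Set.mem_preimage,
        Set.mem_singleton_iff]
      constructor
      · intro h; exact ⟨bdigit z.2 j, h, rfl⟩
      · rintro ⟨m, h1, h2⟩; rw [h1, h2]
    rw [he]
    exact MeasurableSet.iUnion fun m =>
      (((measurable_bdigit j).comp measurable_fst) (measurableSet_singleton m)).inter
        (((measurable_bdigit j).comp measurable_snd) (measurableSet_singleton m))
  have he2 : badSet p = ({z : ℝ × ℝ | 0 ≤ z.1} ∩ {z : ℝ × ℝ | 0 ≤ z.2}) ∩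
      ⋂ j : ℤ, {z : ℝ × ℝ | j < p → bdigit z.1 j ≠ bdigit z.2 j} := by
    ext z
    simp only [badSet, Set.mem_setOf_eq, Set.mem_inter_iff, Set.mem_iInter]
    tauto
  rw [he2]
  refine (((measurableSet_le measurable_const measurable_fst).inter
    (measurableSet_le measurable_const measurable_snd)).inter
    (MeasurableSet.iInter fun j => ?_))
  by_cases hj : j < p
  · have : {z : ℝ × ℝ | j < p → bdigit z.1 j ≠ bdigit z.2 j} =
        {z : ℝ × ℝ | bdigit z.1 j = bdigit z.2 j}ᶜ := by
      ext z; simp [hj]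
    rw [this]
    exact (hjm j).compl
  · have : {z : ℝ × ℝ | j < p → bdigit z.1 j ≠ bdigit z.2 j} = Set.univ := by
      ext z; simp [hj]
    rw [this]
    exact MeasurableSet.univ

lemma badSet_section_countable (p : ℤ) (x : ℝ) :
    Set.Countable {y : ℝ | (x, y) ∈ badSet p} := by
  refine Set.Countable.mono ?_ (countable_fixed_digits p (fun j => 1 - bdigit x j))
  intro y hy
  simp only [badSet, Set.mem_setOf_eq] at hy ⊢
  refine ⟨hy.2.1, fun j hj => ?_⟩
  have h1 : bdigit x j ≤ 1 := Nat.le_of_lt_succ (Nat.mod_lt _ (by norm_num))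
  have h2 : bdigit y j ≤ 1 := Nat.le_of_lt_succ (Nat.mod_lt _ (by norm_num))
  have hne := hy.2.2 j hj
  omega

lemma badSet_null (p : ℤ) : (volume : Measure (ℝ × ℝ)) (badSet p) = 0 := by
  rw [MeasureTheory.Measure.volume_eq_prod, Measure.prod_apply (measurableSet_badSet p)]
  have hs : ∀ x : ℝ, volume (Prod.mk x ⁻¹' badSet p) = 0 := fun x =>
    (badSet_section_countable p x).measure_zero _
  simp [hs]


lemma key_eq (k : ℤ) (l₁ l₂ n : ℕ) (x y : ℝ)
    (hx : x ∈ dyadicI k l₁) (hy : y ∈ dyadicI k l₂)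
    (good : ∀ p : ℤ, ∃ j, j < p ∧ bdigit x j = bdigit y j) :
    walsh k l₁ n x * walsh k l₂ n y = walsh k (l₁ ^^^ l₂) n (dxor x y) := by
  classical
  set m : ℕ := l₁ ^^^ l₂ with hm
  set B : ℤ := (m : ℤ) - k with hB
  set c : ℤ → ℕ := fun j => (bdigit x j + bdigit y j) % 2 with hc
  have hc1 : ∀ j, c j ≤ 1 := fun j => Nat.le_of_lt_succ (Nat.mod_lt _ (by norm_num))
  have hcmid : ∀ j : ℤ, -k ≤ j → c j = m / 2 ^ (j + k).toNat % 2 := by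
    intro j hj
    simp only [hc]
    rw [bdigit_of_mem hx hj, bdigit_of_mem hy hj, nat_xor_digit]
  have hcB : ∀ j, B ≤ j → c j = 0 := by
    intro j hj
    have hjk : -k ≤ j := by omega
    rw [hcmid j hjk]
    have hs : m ≤ (j + k).toNat := by omega
    have hlt : m < 2 ^ (j + k).toNat :=
      lt_of_lt_of_le (Nat.lt_two_pow_self (n := m)) (Nat.pow_le_pow_right (by norm_num) hs)
    rw [Nat.div_eq_of_lt hlt]
  have hgood : ∀ p : ℤ, ∃ j₀, j₀ < p ∧ c j₀ = 0 := by
    intro p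
    obtain ⟨j, hj, heq⟩ := good p
    exact ⟨j, hj, by simp only [hc]; omega⟩
  have hz : dxor x y = ∑' j : ℤ, (c j : ℝ) * 2 ^ j := rfl
  -- membership of dxor x y
  obtain ⟨j₀, hj₀, hcj₀⟩ := hgood (-k)
  obtain ⟨T, hT0, hTlt, hTeq⟩ := abstract_decomp c hc1 B hcB (-k) (by omega) j₀ hj₀ hcj₀
  have hNp : (∑ i ∈ Finset.range (B - -k).toNat, c (-k + i) * 2 ^ i : ℕ) = m := by
    have hBk : (B - -k).toNat = m := by omega
    rw [hBk]
    have : ∀ i ∈ Finset.range m, c (-k + i) * 2 ^ i = m / 2 ^ i % 2 * 2 ^ i := by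
      intro i _
      rw [hcmid (-k + i) (by omega), show ((-k + (i:ℤ) + k).toNat) = i from by omega]
    rw [Finset.sum_congr rfl this, nat_bits_sum]
    exact Nat.mod_eq_of_lt (Nat.lt_two_pow_self (n := m))
  rw [hNp] at hTeq
  have hzmem : dxor x y ∈ dyadicI k m := by
    rw [hz, hTeq]
    constructor
    · linarith
    · have he : (2:ℝ) ^ (-k) * ((m:ℝ) + 1) = 2 ^ (-k) * m + 2 ^ (-k) := by ring
      rw [he]
      linarith
  -- digits of dxor x y below scale -k
  have hdig : ∀ p : ℤ, p < -k → bdigit (dxor x y) p = c p := by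
    intro p hp
    obtain ⟨j₁, hj₁, hcj₁⟩ := hgood p
    obtain ⟨T', hT0', hTlt', hTeq'⟩ := abstract_decomp c hc1 B hcB p (by omega) j₁ hj₁ hcj₁
    set Np : ℕ := ∑ i ∈ Finset.range (B - p).toNat, c (p + i) * 2 ^ i with hNpdef
    have hfl : ⌊dxor x y / 2 ^ p⌋ = (Np : ℤ) := by
      have hppos : (0:ℝ) < 2 ^ p := by positivity
      have hdiv : dxor x y / 2 ^ p = (Np : ℝ) + T' / 2 ^ p := by
        rw [hz, hTeq']
        field_simp
      rw [Int.floor_eq_iff]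
      constructor
      · rw [hdiv]; push_cast
        have : 0 ≤ T' / 2 ^ p := div_nonneg hT0' hppos.le
        linarith
      · rw [hdiv]; push_cast
        have : T' / 2 ^ p < 1 := (div_lt_one hppos).2 hTlt'
        linarith
    have hNpmod : Np % 2 = c p := by
      have hplt : p < B := by omega
      have hnb : (B - p).toNat = ((B - p).toNat - 1) + 1 := by omega
      rw [hNpdef, hnb, Finset.sum_range_succ']
      have hdvd : 2 ∣ ∑ i ∈ Finset.range ((B - p).toNat - 1), c (p + (i + 1 : ℕ)) * 2 ^ (i + 1) := by
        refine Finset.dvd_sum fun i _ => ?_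
        exact Dvd.dvd.mul_left (dvd_pow_self 2 (Nat.succ_ne_zero i)) _
      have hcp : c (p + ((0:ℕ):ℤ)) = c p := by norm_num
      have hcp1 := hc1 p
      simp only [pow_zero, mul_one, hcp]
      omega
    unfold bdigit
    rw [hfl]
    simp only [Int.toNat_natCast]
    exact hNpmod
  -- final assembly
  have hbx : ∀ j : ℕ, bdigit x j ≤ 1 := fun j => Nat.le_of_lt_succ (Nat.mod_lt _ (by norm_num))
  simp only [walsh]
  rw [Set.indicator_of_mem hx, Set.indicator_of_mem hy, Set.indicator_of_mem hzmem, ← pow_add]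
  have hparity : ((∑ j ∈ Finset.range (n + 1), (Nat.testBit n j).toNat * bdigit x (-(j:ℤ) - k - 1))
        + ∑ j ∈ Finset.range (n + 1), (Nat.testBit n j).toNat * bdigit y (-(j:ℤ) - k - 1)) % 2
      = (∑ j ∈ Finset.range (n + 1), (Nat.testBit n j).toNat * bdigit (dxor x y) (-(j:ℤ) - k - 1)) % 2 := by
    rw [← Finset.sum_add_distrib]
    have h1 : ∀ j ∈ Finset.range (n+1),
        (Nat.testBit n j).toNat * bdigit x (-(j:ℤ)-k-1)
          + (Nat.testBit n j).toNat * bdigit y (-(j:ℤ)-k-1)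
        = (Nat.testBit n j).toNat * (bdigit x (-(j:ℤ)-k-1) + bdigit y (-(j:ℤ)-k-1)) := by
      intro j _; ring
    have h2 : ∀ j ∈ Finset.range (n+1),
        (Nat.testBit n j).toNat * bdigit (dxor x y) (-(j:ℤ)-k-1)
        = (Nat.testBit n j).toNat * c (-(j:ℤ)-k-1) := by
      intro j _
      rw [hdig _ (by omega : -(j:ℤ)-k-1 < -k)]
    rw [Finset.sum_congr rfl h1, Finset.sum_congr rfl h2]
    rw [Finset.sum_nat_mod, Finset.sum_nat_mod (Finset.range (n+1)) 2
      (fun j => (Nat.testBit n j).toNat * c (-(j:ℤ)-k-1))]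
    congr 1
    apply Finset.sum_congr rfl
    intro j _
    simp only [hc]
    conv_lhs => rw [Nat.mul_mod]
    conv_rhs => rw [Nat.mul_mod]
    rw [Nat.mod_mod_of_dvd _ (dvd_refl 2)]
  have neg_pow_eq : ∀ a b : ℕ, a % 2 = b % 2 → ((-1:ℝ)) ^ a = (-1) ^ b := by
    intro a b hab
    rcases Nat.even_or_odd a with ha | ha
    · have hb : Even b := Nat.even_iff.mpr (by have := Nat.even_iff.mp ha; omega)
      rw [ha.neg_one_pow, hb.neg_one_pow]
    · have hb : Odd b := Nat.odd_iff.mpr (by have := Nat.odd_iff.mp ha; omega)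
      rw [ha.neg_one_pow, hb.neg_one_pow]
  exact neg_pow_eq _ _ hparity


theorem walsh_mul_walsh_xor (k : ℤ) (l₁ l₂ n : ℕ) :
    ∀ᵐ p : ℝ × ℝ ∂(volume : Measure (ℝ × ℝ)),
      p.1 ∈ dyadicI k l₁ → p.2 ∈ dyadicI k l₂ →
        walsh k l₁ n p.1 * walsh k l₂ n p.2 = walsh k (l₁ ^^^ l₂) n (dxor p.1 p.2) := by
  have hbad : (volume : Measure (ℝ × ℝ)) (⋃ p : ℤ, badSet p) = 0 :=
    measure_iUnion_null fun p => badSet_null p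
  rw [MeasureTheory.ae_iff]
  refine measure_mono_null ?_ hbad
  intro z hz
  simp only [Set.mem_setOf_eq] at hz
  push_neg at hz
  obtain ⟨hxm, hym, hne⟩ := hz
  rw [Set.mem_iUnion]
  by_contra hnb
  push_neg at hnb
  have h01 : (0:ℝ) ≤ z.1 := le_trans (by positivity) hxm.1
  have h02 : (0:ℝ) ≤ z.2 := le_trans (by positivity) hym.1
  have good : ∀ p : ℤ, ∃ j, j < p ∧ bdigit z.1 j = bdigit z.2 j := by
    intro p
    have hb := hnb p
    simp only [badSet, Set.mem_setOf_eq, not_and, not_forall, not_not, exists_prop] at hb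
    exact hb h01 h02
  exact hne (key_eq k l₁ l₂ n z.1 z.2 hxm hym good)
end

section
/- Let I be a dyadic interval and let f be a dyadic step function supported on I (a finite linear combination of indicators of dyadic subintervals of I). Then for almost every x ∈ I, f(x) = Σ_{n=0}^{∞} (|I|^{-1} ∫_I f(t) w_{I,n}(t) dt) · w_{I,n}(x), where the sum has only finitely many nonzero terms. -/
open MeasureTheory

/- ### auxiliary lemmas ### -/


def E (M n i : ℕ) : ℕ :=
  ∑ j ∈ Finset.range M, (Nat.testBit n j).toNat * (Nat.testBit i (M - 1 - j)).toNat

lemma neg_one_pow_congr' {a b : ℕ} (h : a % 2 = b % 2) : ((-1 : ℝ)) ^ a = (-1) ^ b := by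
  conv_lhs => rw [← Nat.div_add_mod a 2, pow_add, pow_mul, neg_one_sq, one_pow, one_mul]
  conv_rhs => rw [← Nat.div_add_mod b 2, pow_add, pow_mul, neg_one_sq, one_pow, one_mul]
  rw [h]

lemma E_symm (M n i : ℕ) : E M n i = E M i n := by
  unfold E
  rw [← Finset.sum_range_reflect]
  refine Finset.sum_congr rfl fun j hj => ?_
  rw [Finset.mem_range] at hj
  rw [show M - 1 - (M - 1 - j) = j from by omega, mul_comm]

lemma testBit_mul_add {c u M t : ℕ} (hu : u < 2 ^ M) (ht : t < M) :
    Nat.testBit (c * 2 ^ M + u) t = Nat.testBit u t := by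
  have h : (c * 2 ^ M + u) % 2 ^ M = u := by
    rw [Nat.add_comm, Nat.add_mul_mod_self_right, Nat.mod_eq_of_lt hu]
  calc Nat.testBit (c * 2 ^ M + u) t
      = Nat.testBit ((c * 2 ^ M + u) % 2 ^ M) t := by
        rw [Nat.testBit_mod_two_pow]; simp [ht]
    _ = Nat.testBit u t := by rw [h]

lemma testBit_top {u M : ℕ} (hu : u < 2 ^ M) : Nat.testBit (2 ^ M + u) M = true := by
  rw [Nat.testBit_two_pow_add_eq, Nat.testBit_lt_two_pow hu]; rfl

lemma Esplit {M n u : ℕ} (b : ℕ) (hu : u < 2 ^ M) (hb : b ≤ 1) :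
    E (M + 1) n (b * 2 ^ M + u) = (Nat.testBit n 0).toNat * b + E M (n / 2) u := by
  unfold E
  rw [Finset.sum_range_succ'
    (fun j => (Nat.testBit n j).toNat * (Nat.testBit (b * 2 ^ M + u) (M + 1 - 1 - j)).toNat) M]
  have hsum : ∀ j ∈ Finset.range M,
      (Nat.testBit n (j + 1)).toNat * (Nat.testBit (b * 2 ^ M + u) (M + 1 - 1 - (j + 1))).toNat
      = (Nat.testBit (n / 2) j).toNat * (Nat.testBit u (M - 1 - j)).toNat := by
    intro j hj
    rw [Finset.mem_range] at hj
    rw [show M + 1 - 1 - (j + 1) = M - 1 - j from by omega, Nat.testBit_succ,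
      testBit_mul_add hu (by omega)]
  rw [Finset.sum_congr rfl hsum]
  have h0 : (Nat.testBit n 0).toNat * (Nat.testBit (b * 2 ^ M + u) (M + 1 - 1 - 0)).toNat
      = (Nat.testBit n 0).toNat * b := by
    interval_cases b
    · simp [Nat.testBit_lt_two_pow hu]
    · rw [one_mul]
      simp [testBit_top hu]
  rw [h0, add_comm]


lemma sumZ (M : ℕ) : ∀ n : ℕ, ∑ i ∈ Finset.range (2 ^ M), ((-1 : ℝ)) ^ E M n i
    = if n % 2 ^ M = 0 then (2 : ℝ) ^ M else 0 := by
  induction M with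
  | zero => intro n; simp [E, Nat.mod_one]
  | succ M ih =>
    intro n
    rw [show (2 : ℕ) ^ (M + 1) = 2 ^ M + 2 ^ M from by ring, Finset.sum_range_add]
    have h1 : ∀ i ∈ Finset.range (2 ^ M), ((-1 : ℝ)) ^ E (M + 1) n i
        = ((-1 : ℝ)) ^ E M (n / 2) i := by
      intro i hi
      rw [Finset.mem_range] at hi
      have h := Esplit (n := n) 0 hi (by norm_num)
      rw [zero_mul, zero_add, mul_zero, zero_add] at h
      rw [h]
    have h2 : ∀ i ∈ Finset.range (2 ^ M), ((-1 : ℝ)) ^ E (M + 1) n (2 ^ M + i)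
        = ((-1 : ℝ)) ^ (Nat.testBit n 0).toNat * ((-1 : ℝ)) ^ E M (n / 2) i := by
      intro i hi
      rw [Finset.mem_range] at hi
      have h := Esplit (n := n) 1 hi (le_refl 1)
      rw [one_mul, mul_one] at h
      rw [h, pow_add]
    rw [Finset.sum_congr rfl h1, Finset.sum_congr rfl h2, ← Finset.mul_sum, ih (n / 2)]
    have hmod : n % (2 ^ M + 2 ^ M) = n % 2 + 2 * (n / 2 % 2 ^ M) := by
      rw [show (2:ℕ) ^ M + 2 ^ M = 2 * 2 ^ M from by ring]; exact Nat.mod_mul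
    rcases Nat.mod_two_eq_zero_or_one n with hpar | hpar
    · have ht : Nat.testBit n 0 = false := by simp [Nat.testBit_zero]; omega
      rw [ht]
      by_cases hz : n / 2 % 2 ^ M = 0
      · rw [if_pos hz, if_pos (by omega)]
        norm_num
        rw [pow_succ]; ring
      · rw [if_neg hz, if_neg (by omega)]
        simp
    · have ht : Nat.testBit n 0 = true := by simp [Nat.testBit_zero]; omega
      rw [ht, if_neg (show ¬ n % (2 ^ M + 2 ^ M) = 0 from by omega)]
      simp only [Bool.toNat_true, pow_one]
      ring


lemma Esplit2 (m : ℕ) : ∀ M n v w : ℕ, m ≤ M → v < 2 ^ m → w < 2 ^ (M - m) →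
    E M n (w + 2 ^ (M - m) * v) = E m n v + E (M - m) (n / 2 ^ m) w := by
  induction m with
  | zero =>
    intro M n v w _ hv _
    interval_cases v
    simp [E]
  | succ m ih =>
    intro M n v w hm hv hw
    obtain ⟨M', rfl⟩ : ∃ M', M = M' + 1 := ⟨M - 1, by omega⟩
    have hm' : m ≤ M' := by omega
    -- write v = b * 2^m + v'
    set b := v / 2 ^ m with hbdef
    set v' := v % 2 ^ m with hvdef
    have hb : b ≤ 1 := by
      have : v < 2 * 2 ^ m := by rw [← pow_succ']; exact hv
      exact Nat.lt_succ_iff.mp (Nat.div_lt_of_lt_mul (by omega))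
    have hv' : v' < 2 ^ m := Nat.mod_lt _ (Nat.two_pow_pos _)
    have hveq : v = b * 2 ^ m + v' := by
      rw [hbdef, hvdef, Nat.add_comm]; exact (Nat.mod_add_div' v (2 ^ m)).symm
    have hMm : M' + 1 - (m + 1) = M' - m := by omega
    have key : w + 2 ^ (M' + 1 - (m + 1)) * v = b * 2 ^ M' + (w + 2 ^ (M' - m) * v') := by
      rw [hMm, hveq]
      have h3 : (2:ℕ) ^ (M' - m) * 2 ^ m = 2 ^ M' := by
        rw [← pow_add]; congr 1; omega
      have h4 : w + 2 ^ (M' - m) * (b * 2 ^ m + v')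
          = b * (2 ^ (M' - m) * 2 ^ m) + (w + 2 ^ (M' - m) * v') := by ring
      rw [h4, h3]
    have hlt : w + 2 ^ (M' - m) * v' < 2 ^ M' := by
      have h1 : w < 2 ^ (M' - m) := by rw [← hMm]; exact hw
      have h2 : 2 ^ (M' - m) * (v' + 1) ≤ 2 ^ (M' - m) * 2 ^ m := by
        exact Nat.mul_le_mul_left _ (by omega)
      have h3 : (2:ℕ) ^ (M' - m) * 2 ^ m = 2 ^ M' := by rw [← pow_add]; congr 1; omega
      calc w + 2 ^ (M' - m) * v' < 2 ^ (M' - m) * (v' + 1) := by ring_nf; omega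
        _ ≤ 2 ^ M' := by rw [← h3]; exact h2
    rw [key, Esplit b hlt hb, ih M' (n / 2) v' w hm' hv' (by rw [← hMm]; exact hw)]
    have hEv : E (m + 1) n v = (Nat.testBit n 0).toNat * b + E m (n / 2) v' := by
      rw [hveq]; exact Esplit b hv' hb
    rw [hEv, hMm]
    have : n / 2 / 2 ^ m = n / 2 ^ (m + 1) := by
      rw [Nat.div_div_eq_div_mul, ← pow_succ']
    rw [this]
    ring

lemma sum_pow_split (B : ℕ) (f : ℕ → ℝ) : ∀ A : ℕ,
    ∑ i ∈ Finset.range (A * B), f i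
      = ∑ v ∈ Finset.range A, ∑ w ∈ Finset.range B, f (w + B * v) := by
  intro A
  induction A with
  | zero => simp
  | succ A ih =>
    rw [Nat.succ_mul, Finset.sum_range_add, ih, Finset.sum_range_succ]
    congr 1
    refine Finset.sum_congr rfl fun w hw => ?_
    rw [Nat.add_comm (A * B) w, Nat.mul_comm]

lemma sumV {m M n : ℕ} (hm : m ≤ M) (hn1 : 2 ^ m ≤ n) (hn2 : n < 2 ^ M) (g : ℕ → ℝ) :
    ∑ i ∈ Finset.range (2 ^ M), g (i / 2 ^ (M - m)) * (-1) ^ E M n i = 0 := by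
  have hMm : (2:ℕ) ^ m * 2 ^ (M - m) = 2 ^ M := by rw [← pow_add]; congr 1; omega
  rw [show (2:ℕ) ^ M = 2 ^ m * 2 ^ (M - m) from hMm.symm,
    sum_pow_split (2 ^ (M - m)) _ (2 ^ m)]
  have hinner : ∀ v ∈ Finset.range (2 ^ m),
      ∑ w ∈ Finset.range (2 ^ (M - m)),
        g ((w + 2 ^ (M - m) * v) / 2 ^ (M - m)) * (-1) ^ E M n (w + 2 ^ (M - m) * v) = 0 := by
    intro v hv
    rw [Finset.mem_range] at hv
    have hterm : ∀ w ∈ Finset.range (2 ^ (M - m)),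
        g ((w + 2 ^ (M - m) * v) / 2 ^ (M - m)) * (-1) ^ E M n (w + 2 ^ (M - m) * v)
        = (g v * (-1) ^ E m n v) * (-1) ^ E (M - m) (n / 2 ^ m) w := by
      intro w hw
      rw [Finset.mem_range] at hw
      have hdiv : (w + 2 ^ (M - m) * v) / 2 ^ (M - m) = v := by
        rw [Nat.add_mul_div_left _ _ (Nat.two_pow_pos _),
          Nat.div_eq_of_lt hw, Nat.zero_add]
      rw [hdiv, Esplit2 m M n v w hm hv hw, pow_add]
      ring
    rw [Finset.sum_congr rfl hterm, ← Finset.mul_sum, sumZ]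
    have h1 : n / 2 ^ m ≠ 0 :=
      (Nat.div_pos hn1 (Nat.two_pow_pos _)).ne'
    have hMm' : (2:ℕ) ^ (M - m) * 2 ^ m = 2 ^ M := by rw [mul_comm]; exact hMm
    have h2 : n / 2 ^ m < 2 ^ (M - m) := by
      apply Nat.div_lt_of_lt_mul
      rw [hMm]; exact hn2
    rw [if_neg (by rw [Nat.mod_eq_of_lt h2]; exact h1), mul_zero]
  rw [Finset.sum_congr rfl hinner, Finset.sum_const, smul_zero]

lemma bool_parity (p q : Bool) : (p.toNat + q.toNat) % 2 = ((p ^^ q)).toNat % 2 := by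
  cases p <;> cases q <;> rfl

lemma orth {m i i' : ℕ} (hi : i < 2 ^ m) (hi' : i' < 2 ^ m) :
    ∑ n ∈ Finset.range (2 ^ m), ((-1 : ℝ)) ^ E m n i * (-1) ^ E m n i'
      = if i = i' then (2 : ℝ) ^ m else 0 := by
  have hterm : ∀ n ∈ Finset.range (2 ^ m),
      ((-1 : ℝ)) ^ E m n i * (-1) ^ E m n i' = (-1) ^ E m (i ^^^ i') n := by
    intro n _
    rw [← pow_add]
    refine neg_one_pow_congr' ?_
    rw [show E m (i ^^^ i') n = E m n (i ^^^ i') from (E_symm m n (i ^^^ i')).symm]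
    unfold E
    rw [← Finset.sum_add_distrib, Finset.sum_nat_mod, Finset.sum_nat_mod (Finset.range m) 2
      (fun j => (Nat.testBit n j).toNat * (Nat.testBit (i ^^^ i') (m - 1 - j)).toNat)]
    congr 1
    refine Finset.sum_congr rfl fun j hj => ?_
    rw [Nat.testBit_xor]
    rcases Nat.testBit n j with _ | _
    · simp
    · simp only [Bool.toNat_true, one_mul]
      exact bool_parity _ _
  rw [Finset.sum_congr rfl hterm, sumZ]
  have hx : i ^^^ i' < 2 ^ m := Nat.xor_lt_two_pow hi hi'
  rw [Nat.mod_eq_of_lt hx]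
  congr 1
  exact propext ⟨fun h => by simpa [Nat.xor_assoc] using congrArg (· ^^^ i') h, fun h => by simp [h]⟩


lemma dyadicI_volume (K : ℤ) (L : ℕ) :
    volume (dyadicI K L) = ENNReal.ofReal ((2:ℝ) ^ (-K)) := by
  rw [dyadicI, Real.volume_Ico]
  congr 1
  ring

lemma dyadicI_nonempty (K : ℤ) (L : ℕ) :
    ((2:ℝ) ^ (-K) * L) ∈ dyadicI K L := by
  constructor
  · exact le_refl _
  · have hp : (0:ℝ) < 2 ^ (-K) := by positivity
    have : (L:ℝ) < L + 1 := by linarith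
    exact mul_lt_mul_of_pos_left this hp

lemma nest (K : ℤ) (d : ℕ) (L : ℕ) :
    dyadicI (K + d) L ⊆ dyadicI K (L / 2 ^ d) := by
  intro x hx
  obtain ⟨h1, h2⟩ := hx
  have hpow : (2:ℝ) ^ (-K) = 2 ^ (-(K + (d:ℤ))) * 2 ^ (d:ℕ) := by
    rw [← zpow_natCast (2:ℝ) d, ← zpow_add₀ (two_ne_zero)]
    congr 1; ring
  constructor
  · rw [hpow]
    calc (2:ℝ) ^ (-(K + (d:ℤ))) * 2 ^ (d:ℕ) * (L / 2 ^ d : ℕ)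
        = 2 ^ (-(K + (d:ℤ))) * ((L / 2 ^ d : ℕ) * (2:ℝ) ^ (d:ℕ)) := by ring
      _ ≤ 2 ^ (-(K + (d:ℤ))) * L := by
          gcongr
          push_cast [← Nat.cast_pow]
          exact_mod_cast Nat.cast_le.mpr (Nat.div_mul_le_self L (2 ^ d))
      _ ≤ x := h1
  · rw [hpow]
    calc x < 2 ^ (-(K + (d:ℤ))) * (L + 1) := h2
      _ ≤ 2 ^ (-(K + (d:ℤ))) * 2 ^ (d:ℕ) * ((L / 2 ^ d : ℕ) + 1) := by
          rw [mul_assoc]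
          gcongr
          have hmod := Nat.div_add_mod L (2 ^ d)
          have hlt := Nat.mod_lt L (Nat.two_pow_pos d : 0 < 2 ^ d)
          have hmul : 2 ^ d * (L / 2 ^ d + 1) = 2 ^ d * (L / 2 ^ d) + 2 ^ d := by ring
          have hnat : L + 1 ≤ 2 ^ d * (L / 2 ^ d + 1) := by omega
          exact_mod_cast hnat

lemma disjoint_same_scale {K : ℤ} {L L' : ℕ} (h : L ≠ L') :
    Disjoint (dyadicI K L) (dyadicI K L') := by
  rcases Nat.lt_or_ge L L' with hlt | hge
  · rw [dyadicI, dyadicI, Set.Ico_disjoint_Ico]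
    refine le_trans (min_le_left _ _) (le_trans ?_ (le_max_right _ _))
    gcongr
    exact_mod_cast hlt
  · have hlt : L' < L := by omega
    rw [dyadicI, dyadicI, Set.Ico_disjoint_Ico]
    refine le_trans (min_le_right _ _) (le_trans ?_ (le_max_left _ _))
    gcongr
    exact_mod_cast hlt

lemma dichot {K K' : ℤ} {L L' : ℕ} (h : K ≤ K') :
    dyadicI K' L' ⊆ dyadicI K L ∨ Disjoint (dyadicI K' L') (dyadicI K L) := by
  obtain ⟨d, rfl⟩ : ∃ d : ℕ, K' = K + d := ⟨(K' - K).toNat, by omega⟩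
  by_cases hq : L' / 2 ^ d = L
  · left; rw [← hq]; exact nest K d L'
  · right
    exact Set.disjoint_of_subset_left (nest K d L') (disjoint_same_scale hq)

lemma bdigit_eq {K : ℤ} {L : ℕ} {x : ℝ} (hx : x ∈ dyadicI K L) (s : ℕ) :
    bdigit x (-K + s) = (Nat.testBit L s).toNat := by
  obtain ⟨h1, h2⟩ := hx
  have hxnn : 0 ≤ x := le_trans (by positivity) h1
  have hKpos : (0:ℝ) < 2 ^ (-K) := by positivity
  have hdiv : x / 2 ^ (-K + (s:ℤ)) = x * 2 ^ K / ((2 ^ s : ℕ) : ℝ) := by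
    rw [zpow_add₀ (two_ne_zero), zpow_neg]
    push_cast
    rw [← zpow_natCast (2:ℝ) s]
    field_simp
  have hy : ⌊x * (2:ℝ) ^ K⌋₊ = L := by
    rw [Nat.floor_eq_iff (by positivity)]
    have hKK : (2:ℝ) ^ (-K) * 2 ^ K = 1 := by
      rw [← zpow_add₀ (two_ne_zero)]; simp
    constructor
    · calc (L:ℝ) = 2 ^ (-K) * L * 2 ^ K := by rw [mul_comm ((2:ℝ)^(-K)) (L:ℝ), mul_assoc, hKK, mul_one]
        _ ≤ x * 2 ^ K := by gcongr
    · calc x * 2 ^ K < 2 ^ (-K) * (L + 1) * 2 ^ K := by gcongr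
        _ = (L:ℝ) + 1 := by rw [mul_comm ((2:ℝ)^(-K)) _, mul_assoc, hKK, mul_one]
  have : bdigit x (-K + s) = (⌊x / 2 ^ (-K + (s:ℤ))⌋₊) % 2 := by
    rw [bdigit, Int.floor_toNat]
  rw [this, hdiv, Nat.floor_div_natCast, hy]
  rw [Nat.testBit_eq_decide_div_mod_eq]
  rcases Nat.mod_two_eq_zero_or_one (L / 2 ^ s) with h | h <;> simp [h]

lemma partIco (δ : ℝ) (hδ : 0 ≤ δ) (a : ℝ) : ∀ N : ℕ,
    ⋃ i ∈ Finset.range N, Set.Ico (a + i * δ) (a + (i + 1) * δ) = Set.Ico a (a + N * δ) := by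
  intro N
  induction N with
  | zero => simp
  | succ N ih =>
    rw [Finset.range_add_one, Finset.set_biUnion_insert, ih, Set.union_comm,
      Set.Ico_union_Ico_eq_Ico]
    · push_cast; ring_nf
    · have : (0:ℝ) ≤ N * δ := by positivity
      linarith
    · push_cast
      have : a + (↑N + 1) * δ = a + ↑N * δ + δ := by ring
      nlinarith [hδ]

lemma partition (k : ℤ) (l : ℕ) (M : ℕ) :
    ⋃ i ∈ Finset.range (2 ^ M), dyadicI (k + M) (2 ^ M * l + i) = dyadicI k l := by
  have key : (2:ℝ) ^ (-(k + (M:ℤ))) * ((2:ℕ) ^ M : ℝ) = 2 ^ (-k) := by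
    rw [show ((2:ℕ) ^ M : ℝ) = (2:ℝ) ^ (M:ℤ) from by push_cast [zpow_natCast]; ring,
      ← zpow_add₀ (two_ne_zero)]
    congr 1; ring
  have heq : ∀ i : ℕ, dyadicI (k + M) (2 ^ M * l + i)
      = Set.Ico ((2:ℝ) ^ (-k) * l + i * 2 ^ (-(k + (M:ℤ))))
        ((2:ℝ) ^ (-k) * l + (i + 1) * 2 ^ (-(k + (M:ℤ)))) := by
    intro i
    have e1 : (2:ℝ) ^ (-(k + (M:ℤ))) * ((2 ^ M * l + i : ℕ) : ℝ)
        = 2 ^ (-k) * l + i * 2 ^ (-(k + (M:ℤ))) := by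
      push_cast
      rw [← key]
      push_cast
      ring
    have e2 : (2:ℝ) ^ (-(k + (M:ℤ))) * (((2 ^ M * l + i : ℕ) : ℝ) + 1)
        = 2 ^ (-k) * l + (i + 1) * 2 ^ (-(k + (M:ℤ))) := by
      push_cast
      rw [← key]
      push_cast
      ring
    rw [dyadicI, e1, e2]
  have hδ : (0:ℝ) ≤ 2 ^ (-(k + (M:ℤ))) := by positivity
  calc ⋃ i ∈ Finset.range (2 ^ M), dyadicI (k + M) (2 ^ M * l + i)
      = ⋃ i ∈ Finset.range (2 ^ M), Set.Ico ((2:ℝ) ^ (-k) * l + i * 2 ^ (-(k + (M:ℤ))))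
        ((2:ℝ) ^ (-k) * l + (i + 1) * 2 ^ (-(k + (M:ℤ)))) := by
        exact Set.iUnion₂_congr (fun i _ => heq i)
    _ = Set.Ico ((2:ℝ) ^ (-k) * l) ((2:ℝ) ^ (-k) * l + (2 ^ M : ℕ) * 2 ^ (-(k + (M:ℤ)))) :=
        partIco _ hδ _ _
    _ = dyadicI k l := by
        rw [dyadicI]
        congr 1
        push_cast
        rw [mul_comm ((2:ℝ)^M) (2 ^ (-(k + (M:ℤ))))]
        rw [show ((2:ℝ) ^ M) = ((2:ℕ) ^ M : ℝ) from by push_cast; ring, key]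
        ring



lemma testBit_mul_add' {c u M t : ℕ} (hu : u < 2 ^ M) (ht : t < M) :
    Nat.testBit (2 ^ M * c + u) t = Nat.testBit u t := by
  rw [mul_comm]; exact testBit_mul_add hu ht

lemma parent_idx (l M : ℕ) (d : ℕ) (i : ℕ) :
    (2 ^ (M + d) * l + i) / 2 ^ d = 2 ^ M * l + i / 2 ^ d := by
  rw [show (2:ℕ) ^ (M + d) * l = 2 ^ d * (2 ^ M * l) from by rw [pow_add]; ring,
    Nat.mul_add_div (Nat.two_pow_pos d)]

lemma J_subset_I (k : ℤ) (l : ℕ) (M i : ℕ) (hi : i < 2 ^ M) :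
    dyadicI (k + M) (2 ^ M * l + i) ⊆ dyadicI k l := by
  have h := nest k M (2 ^ M * l + i)
  have hq : (2 ^ M * l + i) / 2 ^ M = l := by
    rw [Nat.mul_add_div (Nat.two_pow_pos M), Nat.div_eq_of_lt hi,
      Nat.add_zero]
  rwa [hq] at h

lemma walsh_eval {k : ℤ} {l : ℕ} {M n i : ℕ} (hn : n < 2 ^ M) (hi : i < 2 ^ M) {x : ℝ}
    (hx : x ∈ dyadicI (k + M) (2 ^ M * l + i)) :
    walsh k l n x = (-1 : ℝ) ^ E M n i := by
  have hxI : x ∈ dyadicI k l := J_subset_I k l M i hi hx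
  rw [walsh, Set.indicator_of_mem hxI]
  congr 1
  have hd : ∀ j : ℕ, j < M → bdigit x (-(j:ℤ) - k - 1) = (Nat.testBit i (M - 1 - j)).toNat := by
    intro j hj
    have hpos : (-(j:ℤ) - k - 1) = -(k + (M:ℤ)) + ((M - 1 - j : ℕ) : ℤ) := by omega
    rw [hpos, bdigit_eq hx (M - 1 - j), testBit_mul_add' hi (by omega)]
  set T := Finset.range (max (n + 1) M) with hT
  have e1 : ∑ j ∈ Finset.range (n + 1), (Nat.testBit n j).toNat * bdigit x (-(j:ℤ) - k - 1)
      = ∑ j ∈ T, (Nat.testBit n j).toNat * bdigit x (-(j:ℤ) - k - 1) := by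
    refine Finset.sum_subset (Finset.range_subset_range.mpr (le_max_left _ _)) ?_
    intro j _ hj
    rw [Finset.mem_range, not_lt] at hj
    have : Nat.testBit n j = false := Nat.testBit_lt_two_pow
      (lt_of_lt_of_le (Nat.lt_two_pow_self (n := n)) (Nat.pow_le_pow_right (by norm_num) (by omega)))
    rw [this]; simp
  have e2 : E M n i = ∑ j ∈ T, (Nat.testBit n j).toNat * (Nat.testBit i (M - 1 - j)).toNat := by
    refine Finset.sum_subset (Finset.range_subset_range.mpr (le_max_right _ _)) ?_
    intro j _ hj
    rw [Finset.mem_range, not_lt] at hj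
    have : Nat.testBit n j = false := Nat.testBit_lt_two_pow
      (lt_of_lt_of_le hn (Nat.pow_le_pow_right (by norm_num) hj))
    rw [this]; simp
  rw [e1, e2]
  refine Finset.sum_congr rfl fun j _ => ?_
  rcases hb : Nat.testBit n j with _ | _
  · simp
  · have hjM : j < M := by
      by_contra hge
      rw [Nat.testBit_lt_two_pow (lt_of_lt_of_le hn
        (Nat.pow_le_pow_right (by norm_num) (by omega)))] at hb
      exact Bool.false_ne_true hb
    rw [hd j hjM]

lemma integral_const_on {K : ℤ} {L : ℕ} {h : ℝ → ℝ} {c : ℝ}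
    (hc : ∀ x ∈ dyadicI K L, h x = c) :
    ∫ x in dyadicI K L, h x = c * (2:ℝ) ^ (-K) := by
  have hmeas : MeasurableSet (dyadicI K L) := measurableSet_Ico
  rw [MeasureTheory.setIntegral_congr_fun hmeas (fun x hx => hc x hx),
    MeasureTheory.setIntegral_const, MeasureTheory.measureReal_def, dyadicI_volume, ENNReal.toReal_ofReal (by positivity),
    smul_eq_mul, mul_comm]

lemma integ (k : ℤ) (l : ℕ) (M : ℕ) (h : ℝ → ℝ) (c : ℕ → ℝ)
    (hc : ∀ i ∈ Finset.range (2 ^ M), ∀ x ∈ dyadicI (k + M) (2 ^ M * l + i), h x = c i) :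
    ∫ x in dyadicI k l, h x
      = ∑ i ∈ Finset.range (2 ^ M), c i * (2:ℝ) ^ (-(k + (M:ℤ))) := by
  rw [← partition k l M]
  have hsplit := MeasureTheory.integral_biUnion_finset (μ := volume) (f := h)
    (Finset.range (2 ^ M)) (s := fun i => dyadicI (k + M) (2 ^ M * l + i))
    (fun i _ => measurableSet_Ico)
    (fun i hi j hj hij => disjoint_same_scale (by omega))
    (fun i hi => by
      rw [MeasureTheory.integrableOn_congr_fun (fun x hx => hc i hi x hx) measurableSet_Ico]
      refine (MeasureTheory.integrableOn_const_iff).mpr (Or.inr ?_)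
      rw [dyadicI_volume]
      exact ENNReal.ofReal_lt_top)
  rw [hsplit]
  refine Finset.sum_congr rfl fun i hi => ?_
  exact integral_const_on (fun x hx => hc i hi x hx)

theorem walsh_fourier_expansion (k : ℤ) (l : ℕ) (f : ℝ → ℝ)
    (hf : ∃ (s : Finset (ℤ × ℕ)) (c : ℤ × ℕ → ℝ),
      (∀ p ∈ s, dyadicI p.1 p.2 ⊆ dyadicI k l) ∧
      ∀ x : ℝ, f x = ∑ p ∈ s, c p * Set.indicator (dyadicI p.1 p.2) 1 x) :
    ∃ N : ℕ,
      (∀ n : ℕ, N ≤ n → (∫ t in dyadicI k l, f t * walsh k l n t) = 0) ∧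
      ∀ᵐ x : ℝ ∂volume, x ∈ dyadicI k l →
        f x = ∑ n ∈ Finset.range N,
          ((2 : ℝ) ^ k * ∫ t in dyadicI k l, f t * walsh k l n t) * walsh k l n x := by
  obtain ⟨s, c, hsub, hrepr⟩ := hf
  -- every interval in s has scale at least k
  have hks : ∀ p ∈ s, k ≤ p.1 := by
    intro p hp
    by_contra hlt
    push_neg at hlt
    have h1 : (2:ℝ) ^ (-k) * l ≤ 2 ^ (-p.1) * p.2 := (hsub p hp (dyadicI_nonempty p.1 p.2)).1
    have h2 : (2:ℝ) ^ (-p.1) * (p.2 + 1) ≤ 2 ^ (-k) * (l + 1) := by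
      by_contra hgt
      push_neg at hgt
      -- the right endpoint of p's interval is beyond I, but points just below it are in p's interval
      have hmem : max ((2:ℝ) ^ (-k) * (l + 1)) ((2:ℝ) ^ (-p.1) * p.2) ∈ dyadicI p.1 p.2 := by
        constructor
        · exact le_max_right _ _
        · exact max_lt hgt (by
            have hp2 : (0:ℝ) < 2 ^ (-p.1) := by positivity
            have : (p.2:ℝ) < p.2 + 1 := by linarith
            exact mul_lt_mul_of_pos_left this hp2)
      have := (hsub p hp hmem).2
      have hge : (2:ℝ) ^ (-k) * (l + 1) ≤ max ((2:ℝ) ^ (-k) * (l + 1)) ((2:ℝ) ^ (-p.1) * p.2) :=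
        le_max_left _ _
      linarith
    -- length comparison: 2^{-p.1} ≤ 2^{-k} but -k < -p.1 gives contradiction
    have hlen : (2:ℝ) ^ (-p.1) ≤ 2 ^ (-k) := by
      have e1 : (2:ℝ) ^ (-p.1) * (p.2 + 1) - 2 ^ (-p.1) * p.2 = 2 ^ (-p.1) := by ring
      have e2 : (2:ℝ) ^ (-k) * (l + 1) - 2 ^ (-k) * l = 2 ^ (-k) := by ring
      nlinarith [h1, h2]
    have : (2:ℝ) ^ (-k) < 2 ^ (-p.1) := by
      apply zpow_lt_zpow_right₀ (by norm_num : (1:ℝ) < 2)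
      omega
    linarith
  set M := s.sup (fun p => (p.1 - k).toNat) with hM
  have hpM : ∀ p ∈ s, p.1 ≤ k + M := by
    intro p hp
    have h1 := Finset.le_sup (f := fun p => (p.1 - k).toNat) hp
    have hk := hks p hp
    omega
  -- f is constant on the dyadic grandchildren at scale k+M
  have fconst : ∀ i ∈ Finset.range (2 ^ M), ∀ x ∈ dyadicI (k + M) (2 ^ M * l + i),
      ∀ y ∈ dyadicI (k + M) (2 ^ M * l + i), f x = f y := by
    intro i _ x hx y hy
    rw [hrepr x, hrepr y]
    refine Finset.sum_congr rfl fun p hp => ?_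
    rcases dichot (K := p.1) (K' := k + M) (L := p.2) (L' := 2 ^ M * l + i) (hpM p hp) with
      hsub' | hdisj
    · rw [Set.indicator_of_mem (hsub' hx), Set.indicator_of_mem (hsub' hy)]
      simp
    · rw [Set.indicator_of_notMem (Set.disjoint_left.mp hdisj hx),
        Set.indicator_of_notMem (Set.disjoint_left.mp hdisj hy)]
  set a : ℕ → ℝ := fun i => f ((2:ℝ) ^ (-(k + (M:ℤ))) * ((2 ^ M * l + i : ℕ) : ℝ)) with haa
  have ha : ∀ i ∈ Finset.range (2 ^ M), ∀ x ∈ dyadicI (k + M) (2 ^ M * l + i), f x = a i := by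
    intro i hi x hx
    exact fconst i hi x hx _ (dyadicI_nonempty (k + M) (2 ^ M * l + i))
  -- the coefficient formula at any finer scale M' ≥ M
  have coeff : ∀ M' n : ℕ, M ≤ M' → n < 2 ^ M' →
      (∫ t in dyadicI k l, f t * walsh k l n t)
        = ∑ i ∈ Finset.range (2 ^ M'),
            (a (i / 2 ^ (M' - M)) * (-1) ^ E M' n i) * (2:ℝ) ^ (-(k + (M':ℤ))) := by
    intro M' n hMM' hn
    apply integ k l M' (fun t => f t * walsh k l n t)
      (fun i => a (i / 2 ^ (M' - M)) * (-1) ^ E M' n i)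
    intro i hi x hx
    rw [Finset.mem_range] at hi
    have hw := walsh_eval (k := k) (l := l) hn hi hx
    have hfx : f x = a (i / 2 ^ (M' - M)) := by
      have hd : (k:ℤ) + M' = (k + M) + ((M' - M : ℕ) : ℤ) := by omega
      have hx' : x ∈ dyadicI ((k + M) + ((M' - M : ℕ) : ℤ)) (2 ^ M' * l + i) := by
        rwa [hd] at hx
      have hnest := nest (k + M) (M' - M) (2 ^ M' * l + i) hx'
      have hq : (2 ^ M' * l + i) / 2 ^ (M' - M) = 2 ^ M * l + i / 2 ^ (M' - M) := by
        have := parent_idx l M (M' - M) i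
        rwa [show M + (M' - M) = M' from by omega] at this
      rw [hq] at hnest
      have hilt : i / 2 ^ (M' - M) < 2 ^ M := by
        apply Nat.div_lt_of_lt_mul
        rw [← pow_add, show M' - M + M = M' from by omega]
        exact hi
      exact ha _ (Finset.mem_range.mpr hilt) x hnest
    rw [hw, hfx]
  refine ⟨2 ^ M, ?_, ?_⟩
  · -- vanishing of high coefficients
    intro n hn
    have hMn : M ≤ n := le_trans (le_of_lt (Nat.lt_two_pow_self (n := M))) hn
    rw [coeff (n + 1) n (by omega) (by
      exact lt_of_lt_of_le (Nat.lt_two_pow_self (n := n)) (Nat.pow_le_pow_right (by norm_num) (by omega)))]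
    rw [← Finset.sum_mul, sumV (by omega : M ≤ n + 1) hn (lt_of_lt_of_le (Nat.lt_two_pow_self (n := n))
      (Nat.pow_le_pow_right (by norm_num) (by omega))) a, zero_mul]
  · -- reconstruction
    refine MeasureTheory.ae_of_all _ ?_
    intro x hx
    have hx' : x ∈ ⋃ i ∈ Finset.range (2 ^ M), dyadicI (k + M) (2 ^ M * l + i) := by
      rw [partition k l M]; exact hx
    rw [Set.mem_iUnion₂] at hx'
    obtain ⟨i, hi, hxi⟩ := hx'
    rw [Finset.mem_range] at hi
    have hzz : (2:ℝ) ^ (k:ℤ) * 2 ^ (-(k + (M:ℤ))) = 2 ^ (-(M:ℤ)) := by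
      rw [← zpow_add₀ (two_ne_zero)]; congr 1; ring
    have hterm : ∀ n ∈ Finset.range (2 ^ M),
        ((2 : ℝ) ^ k * ∫ t in dyadicI k l, f t * walsh k l n t) * walsh k l n x
          = ∑ i' ∈ Finset.range (2 ^ M),
              (a i' * 2 ^ (-(M:ℤ))) * ((-1) ^ E M n i' * (-1) ^ E M n i) := by
      intro n hn
      rw [Finset.mem_range] at hn
      rw [coeff M n (le_refl M) hn, walsh_eval (k := k) (l := l) hn hi hxi,
        Finset.mul_sum, Finset.sum_mul]
      refine Finset.sum_congr rfl fun i' _ => ?_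
      rw [Nat.sub_self, pow_zero, Nat.div_one]
      linear_combination (a i' * (-1) ^ E M n i' * (-1) ^ E M n i) * hzz
    rw [Finset.sum_congr rfl hterm, Finset.sum_comm]
    have hinner : ∀ i' ∈ Finset.range (2 ^ M),
        ∑ n ∈ Finset.range (2 ^ M), (a i' * 2 ^ (-(M:ℤ))) * ((-1) ^ E M n i' * (-1) ^ E M n i)
          = (a i' * 2 ^ (-(M:ℤ))) * (if i' = i then (2:ℝ) ^ M else 0) := by
      intro i' hi'
      rw [Finset.mem_range] at hi'
      rw [← Finset.mul_sum, orth hi' hi]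
    rw [Finset.sum_congr rfl hinner, Finset.sum_eq_single i]
    · rw [if_pos rfl]
      have hone : (2:ℝ) ^ (-(M:ℤ)) * 2 ^ M = 1 := by
        rw [show ((2:ℝ) ^ M) = (2:ℝ) ^ (M:ℤ) from (zpow_natCast 2 M).symm,
          ← zpow_add₀ (two_ne_zero)]
        simp
      rw [ha i (Finset.mem_range.mpr hi) x hxi, mul_assoc, hone, mul_one]
    · intro i' _ hne
      rw [if_neg hne, mul_zero]
    · intro hni
      exact absurd (Finset.mem_range.mpr hi) hni
end

section
/- Let I, J, Ω be dyadic intervals with |I| = |J| = 2|Ω|^{-1} (so I×J×Ω is a multitile). Then for almost all x₁, x₂, x₃, y₁, y₂: 8·Σ_{α,β∈{0,1}} w_{I_α,0}(x₁) w_{I_α×Ω}(x₂) w_{I_α×Ω}(x₃) w_{J_β×Ω}(y₁) w_{J_β×Ω}(y₂) − Σ_{γ∈{0,1}} w_{I,0}(x₁) w_{I×Ω_γ}(x₂) w_{I×Ω_γ}(x₃) w_{J×Ω_γ}(y₁) w_{J×Ω_γ}(y₂) = Σ_{γ∈{0,1}} w_{I,0}(x₁) w_{I×Ω_{γ⊕1}}(x₂)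 w_{I×Ω_{γ⊕1}}(x₃) w_{J×Ω_γ}(y₁) w_{J×Ω_γ}(y₂) + Σ_{γ,δ∈{0,1}} w_{I,1}(x₁) w_{I×Ω_δ}(x₂) w_{I×Ω_{δ⊕1}}(x₃) w_{J×Ω_γ}(y₁) w_{J×Ω_γ}(y₂), where I₀,I₁ (resp. J₀,J₁; Ω₀,Ω₁) denote left/right halves and γ⊕1 = 1−γ. -/
open MeasureTheory

lemma bdigit_of_mem_s6 {k : ℤ} {m : ℕ} {x : ℝ} (hx : x ∈ dyadicI (k+1) m) :
    bdigit x (-k-1) = m % 2 := by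
  have hc : (0:ℝ) < (2:ℝ)^(-k-1) := by positivity
  obtain ⟨h1, h2⟩ := hx
  rw [show (-(k+1) : ℤ) = -k-1 by ring] at h1 h2
  have hfl : ⌊x / (2:ℝ)^(-k-1)⌋ = (m:ℤ) := by
    rw [Int.floor_eq_iff]
    constructor
    · rw [le_div_iff₀ hc]; push_cast; linarith
    · rw [div_lt_iff₀ hc]; push_cast; linarith
  simp [bdigit, hfl]

lemma sum_testBit_shrink (n : ℕ) (c : ℕ → ℕ) {A B : ℕ} (hA : n < 2^A) (hAB : A ≤ B) :
    ∑ j ∈ Finset.range B, (n.testBit j).toNat * c j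
      = ∑ j ∈ Finset.range A, (n.testBit j).toNat * c j := by
  refine (Finset.sum_subset (Finset.range_subset_range.2 hAB) ?_).symm
  intro j hj hj'
  have hAj : A ≤ j := le_of_not_gt (by simpa using hj')
  have : n < 2^j := lt_of_lt_of_le hA (Nat.pow_le_pow_right (by norm_num) hAj)
  rw [Nat.testBit_lt_two_pow this]
  simp

lemma sum_testBit_eq (n : ℕ) (c : ℕ → ℕ) {A B : ℕ} (hA : n < 2^A) (hB : n < 2^B) :
    ∑ j ∈ Finset.range A, (n.testBit j).toNat * c j
      = ∑ j ∈ Finset.range B, (n.testBit j).toNat * c j := by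
  rcases le_total A B with h | h
  · exact (sum_testBit_shrink n c hA h).symm
  · exact sum_testBit_shrink n c hB h

lemma exp_split (n γ : ℕ) (hγ : γ < 2) (k : ℤ) (x : ℝ) :
    ∑ j ∈ Finset.range (2*n+γ+1), ((2*n+γ).testBit j).toNat * bdigit x (-(j:ℤ)-k-1)
      = γ * bdigit x (-k-1)
        + ∑ j ∈ Finset.range (n+1), (n.testBit j).toNat * bdigit x (-(j:ℤ)-(k+1)-1) := by
  rw [Finset.sum_range_succ']
  have h0 : ((2*n+γ).testBit 0).toNat = γ := by
    rw [Nat.testBit_zero]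
    interval_cases γ <;> simp [Nat.add_mod, Nat.mul_mod_right]
  have hsh : ∀ j, ((2*n+γ).testBit (j+1)).toNat * bdigit x (-((j+1:ℕ):ℤ)-k-1)
      = (n.testBit j).toNat * bdigit x (-(j:ℤ)-(k+1)-1) := by
    intro j
    have hb : (2*n+γ).testBit (j+1) = n.testBit j := by
      rw [Nat.testBit_succ]
      congr 1
      omega
    rw [hb]
    congr 2
    push_cast
    ring
  rw [Finset.sum_congr rfl (fun j _ => hsh j)]
  rw [sum_testBit_eq n _ (lt_of_lt_of_le ((Nat.lt_two_pow_self (n := n))) (Nat.pow_le_pow_right (by norm_num) (by omega))) ((Nat.lt_two_pow_self (n := n)) |>.trans_le (Nat.pow_le_pow_right (by norm_num) (Nat.le_succ n)))]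
  have h00 : (-(0:ℕ):ℤ) - k - 1 = -k-1 := by push_cast; ring
  simp only [Nat.succ_eq_add_one, h0, h00]
  omega

lemma half_left_subset (k : ℤ) (l : ℕ) : dyadicI (k+1) (2*l) ⊆ dyadicI k l := by
  intro x hx
  have hc : (0:ℝ) < (2:ℝ)^(-(k+1)) := by positivity
  have h2 : (2:ℝ)^(-k) = (2:ℝ)^(-(k+1)) * 2 := by
    rw [← zpow_add_one₀ (two_ne_zero)]; congr 1; ring
  obtain ⟨h1, h2'⟩ := hx
  push_cast at h1 h2'
  constructor <;> rw [h2] <;> push_cast <;> nlinarith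

lemma half_right_subset (k : ℤ) (l : ℕ) : dyadicI (k+1) (2*l+1) ⊆ dyadicI k l := by
  intro x hx
  have hc : (0:ℝ) < (2:ℝ)^(-(k+1)) := by positivity
  have h2 : (2:ℝ)^(-k) = (2:ℝ)^(-(k+1)) * 2 := by
    rw [← zpow_add_one₀ (two_ne_zero)]; congr 1; ring
  obtain ⟨h1, h2'⟩ := hx
  push_cast at h1 h2'
  constructor <;> rw [h2] <;> push_cast <;> nlinarith

lemma halves_cover {k : ℤ} {l : ℕ} {x : ℝ} (hx : x ∈ dyadicI k l) :
    x ∈ dyadicI (k+1) (2*l) ∨ x ∈ dyadicI (k+1) (2*l+1) := by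
  have hc : (0:ℝ) < (2:ℝ)^(-(k+1)) := by positivity
  have h2 : (2:ℝ)^(-k) = (2:ℝ)^(-(k+1)) * 2 := by
    rw [← zpow_add_one₀ (two_ne_zero)]; congr 1; ring
  obtain ⟨h1, h2'⟩ := hx
  rw [h2] at h1 h2'
  by_cases hmid : x < (2:ℝ)^(-(k+1)) * (2*l+1)
  · left; constructor <;> push_cast <;> nlinarith
  · right
    push_neg at hmid
    constructor <;> push_cast <;> nlinarith

lemma halves_disjoint {k : ℤ} {l : ℕ} {x : ℝ} (hx : x ∈ dyadicI (k+1) (2*l)) :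
    x ∉ dyadicI (k+1) (2*l+1) := by
  obtain ⟨h1, h2⟩ := hx
  intro hx'
  obtain ⟨h1', h2'⟩ := hx'
  push_cast at h1 h2 h1' h2'
  nlinarith

lemma walsh_rec (k : ℤ) (l n γ : ℕ) (hγ : γ < 2) (x : ℝ) :
    walsh k l (2*n+γ) x
      = walsh (k+1) (2*l) n x + (-1:ℝ)^γ * walsh (k+1) (2*l+1) n x := by
  by_cases hxl : x ∈ dyadicI (k+1) (2*l)
  · have hxI : x ∈ dyadicI k l := half_left_subset k l hxl
    have hxr : x ∉ dyadicI (k+1) (2*l+1) := halves_disjoint hxl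
    have hb : bdigit x (-k-1) = 0 := by
      rw [bdigit_of_mem_s6 hxl, Nat.mul_mod_right]
    rw [walsh, walsh, walsh, Set.indicator_of_mem hxI, Set.indicator_of_mem hxl,
      Set.indicator_of_notMem hxr, exp_split n γ hγ k x, hb]
    ring
  · by_cases hxr : x ∈ dyadicI (k+1) (2*l+1)
    · have hxI : x ∈ dyadicI k l := half_right_subset k l hxr
      have hb : bdigit x (-k-1) = 1 := by
        rw [bdigit_of_mem_s6 hxr]; omega
      rw [walsh, walsh, walsh, Set.indicator_of_mem hxI, Set.indicator_of_mem hxr,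
        Set.indicator_of_notMem hxl, exp_split n γ hγ k x, hb, mul_one, pow_add]
      ring
    · have hxI : x ∉ dyadicI k l := fun h => by rcases halves_cover h with h' | h' <;> tauto
      rw [walsh, walsh, walsh, Set.indicator_of_notMem hxI,
        Set.indicator_of_notMem hxl, Set.indicator_of_notMem hxr]
      ring

theorem multitile_identity_B1 (k : ℤ) (l₁ l₂ n : ℕ) :
    ∀ᵐ p : ℝ × ℝ × ℝ × ℝ × ℝ ∂(volume : Measure (ℝ × ℝ × ℝ × ℝ × ℝ)),
      8 * (∑ α ∈ Finset.range 2, ∑ β ∈ Finset.range 2,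
          walsh (k + 1) (2 * l₁ + α) 0 p.1 * walsh (k + 1) (2 * l₁ + α) n p.2.1 *
          walsh (k + 1) (2 * l₁ + α) n p.2.2.1 *
          walsh (k + 1) (2 * l₂ + β) n p.2.2.2.1 * walsh (k + 1) (2 * l₂ + β) n p.2.2.2.2)
        - (∑ γ ∈ Finset.range 2,
          walsh k l₁ 0 p.1 * walsh k l₁ (2 * n + γ) p.2.1 * walsh k l₁ (2 * n + γ) p.2.2.1 *
          walsh k l₂ (2 * n + γ) p.2.2.2.1 * walsh k l₂ (2 * n + γ) p.2.2.2.2)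
      = (∑ γ ∈ Finset.range 2,
          walsh k l₁ 0 p.1 * walsh k l₁ (2 * n + (1 - γ)) p.2.1 * walsh k l₁ (2 * n + (1 - γ)) p.2.2.1 *
          walsh k l₂ (2 * n + γ) p.2.2.2.1 * walsh k l₂ (2 * n + γ) p.2.2.2.2)
        + (∑ γ ∈ Finset.range 2, ∑ δ ∈ Finset.range 2,
          walsh k l₁ 1 p.1 * walsh k l₁ (2 * n + δ) p.2.1 * walsh k l₁ (2 * n + (1 - δ)) p.2.2.1 *
          walsh k l₂ (2 * n + γ) p.2.2.2.1 * walsh k l₂ (2 * n + γ) p.2.2.2.2) := by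
  apply ae_of_all
  rintro ⟨x1, x2, x3, y1, y2⟩
  have e1 : walsh k l₁ 0 x1
      = walsh (k+1) (2*l₁) 0 x1 + walsh (k+1) (2*l₁+1) 0 x1 := by
    have := walsh_rec k l₁ 0 0 (by norm_num) x1; simpa using this
  have e2 : walsh k l₁ 1 x1
      = walsh (k+1) (2*l₁) 0 x1 - walsh (k+1) (2*l₁+1) 0 x1 := by
    have := walsh_rec k l₁ 0 1 (by norm_num) x1; simpa [sub_eq_add_neg] using this
  have e3 : walsh k l₁ (2*n) x2
      = walsh (k+1) (2*l₁) n x2 + walsh (k+1) (2*l₁+1) n x2 := by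
    have := walsh_rec k l₁ n 0 (by norm_num) x2; simpa using this
  have e4 : walsh k l₁ (2*n+1) x2
      = walsh (k+1) (2*l₁) n x2 - walsh (k+1) (2*l₁+1) n x2 := by
    have := walsh_rec k l₁ n 1 (by norm_num) x2; simpa [sub_eq_add_neg] using this
  have e5 : walsh k l₁ (2*n) x3
      = walsh (k+1) (2*l₁) n x3 + walsh (k+1) (2*l₁+1) n x3 := by
    have := walsh_rec k l₁ n 0 (by norm_num) x3; simpa using this
  have e6 : walsh k l₁ (2*n+1) x3
      = walsh (k+1) (2*l₁) n x3 - walsh (k+1) (2*l₁+1) n x3 := by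
    have := walsh_rec k l₁ n 1 (by norm_num) x3; simpa [sub_eq_add_neg] using this
  have e7 : walsh k l₂ (2*n) y1
      = walsh (k+1) (2*l₂) n y1 + walsh (k+1) (2*l₂+1) n y1 := by
    have := walsh_rec k l₂ n 0 (by norm_num) y1; simpa using this
  have e8 : walsh k l₂ (2*n+1) y1
      = walsh (k+1) (2*l₂) n y1 - walsh (k+1) (2*l₂+1) n y1 := by
    have := walsh_rec k l₂ n 1 (by norm_num) y1; simpa [sub_eq_add_neg] using this
  have e9 : walsh k l₂ (2*n) y2
      = walsh (k+1) (2*l₂) n y2 + walsh (k+1) (2*l₂+1) n y2 := by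
    have := walsh_rec k l₂ n 0 (by norm_num) y2; simpa using this
  have e10 : walsh k l₂ (2*n+1) y2
      = walsh (k+1) (2*l₂) n y2 - walsh (k+1) (2*l₂+1) n y2 := by
    have := walsh_rec k l₂ n 1 (by norm_num) y2; simpa [sub_eq_add_neg] using this
  simp only [Finset.sum_range_succ, Finset.sum_range_zero, Nat.add_zero, Nat.sub_zero,
    Nat.sub_self, zero_add]
  rw [e1, e2, e3, e4, e5, e6, e7, e8, e9, e10]
  ring
end

section
/- Let F₂ be a real-valued dyadic step function on [0,1)² and B₄(I×J×Ω) := ( |J|^{-1}∫_J ( |I|^{-1}∫_I F₂(x,y) w_{I×Ω}(x) dx )² dy )². Then for every multitile P = I×J×Ω, the first-order difference satisfies (□B₄)(P) = Σ_{β∈{0,1}} Π_{γ∈{0,1}} [ [F₂(x,y)]²_{x,I×Ω_γ} ]_{y,J_β,0} + Σ_{γ∈{0,1}} [ [F₂(x,y)]²_{x,I×Ω_γ} ]²_{y,J,1} + 4 Σ_{ε∈{0,1}} [ [F₂(x,y)]_{x,I×Ω_0} [F₂(x,y)]_{x,I×Ω_1} ]²_{y,J,ε}; in particular (□B₄)(P)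 ≥ 0. -/
open MeasureTheory

/-- `B₄` evaluated at the tile `(k, l₁, l₂, n)`. -/
noncomputable def B4 (F : ℝ → ℝ → ℝ) (k : ℤ) (l₁ l₂ n : ℕ) : ℝ :=
  (avg k l₂ 0 (fun y => (avg k l₁ n (fun x => F x y)) ^ 2)) ^ 2

/-! ### Auxiliary lemmas -/

lemma measurableSet_dyadicI (k : ℤ) (l : ℕ) : MeasurableSet (dyadicI k l) :=
  measurableSet_Ico

lemma volume_dyadicI_lt_top (k : ℤ) (l : ℕ) : volume (dyadicI k l) < ⊤ := by
  rw [dyadicI, Real.volume_Ico]; exact ENNReal.ofReal_lt_top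

lemma meas_bdigit (j : ℤ) : Measurable fun x : ℝ => bdigit x j := by
  have h1 : Measurable fun x : ℝ => ⌊x / 2 ^ j⌋ :=
    Int.measurable_floor.comp (measurable_id.div_const _)
  exact (measurable_of_countable (fun z : ℤ => (Int.toNat z) % 2)).comp h1

lemma meas_walsh (k : ℤ) (l n : ℕ) : Measurable (walsh k l n) := by
  unfold walsh
  refine Measurable.indicator ?_ (measurableSet_dyadicI k l)
  have h : Measurable fun x : ℝ => ∑ j ∈ Finset.range (n + 1),
      (Nat.testBit n j).toNat * bdigit x (-(j : ℤ) - k - 1) :=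
    Finset.measurable_sum _ fun j _ => (meas_bdigit _).const_mul _
  exact (measurable_of_countable (fun m : ℕ => (-1 : ℝ) ^ m)).comp h

lemma abs_walsh_le (k : ℤ) (l n : ℕ) (x : ℝ) : |walsh k l n x| ≤ 1 := by
  unfold walsh
  classical
  rw [Set.indicator_apply]
  split_ifs
  · rw [abs_pow, abs_neg, abs_one, one_pow]
  · simp

lemma walsh_zero_nonneg (k : ℤ) (l : ℕ) (x : ℝ) : 0 ≤ walsh k l 0 x := by
  unfold walsh
  refine Set.indicator_nonneg (fun y _ => ?_) x
  norm_num [Nat.zero_testBit]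

lemma abs_ind_le (s : Set ℝ) (x : ℝ) : |Set.indicator s (1 : ℝ → ℝ) x| ≤ 1 := by
  classical
  rw [Set.indicator_apply]; split_ifs <;> simp

lemma mb_integrableOn {f : ℝ → ℝ} (hm : Measurable f) {C : ℝ} (hb : ∀ x, |f x| ≤ C)
    (k : ℤ) (l : ℕ) : IntegrableOn f (dyadicI k l) := by
  refine Integrable.mono' (g := fun _ => C)
    (integrableOn_const (C := C) (μ := volume) (s := dyadicI k l) (volume_dyadicI_lt_top k l).ne)
    hm.aestronglyMeasurable.restrict
    (Filter.Eventually.of_forall fun x => by simpa [Real.norm_eq_abs] using hb x)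

lemma bdd_mul {f g : ℝ → ℝ} {Cf Cg : ℝ} (hf : ∀ x, |f x| ≤ Cf) (hg : ∀ x, |g x| ≤ Cg) :
    ∀ x, |f x * g x| ≤ |Cf| * |Cg| := fun x => by
  rw [abs_mul]
  exact mul_le_mul (le_trans (hf x) (le_abs_self _)) (le_trans (hg x) (le_abs_self _))
    (abs_nonneg _) (abs_nonneg _)

lemma mb_mul_walsh_integrableOn {f : ℝ → ℝ} (hm : Measurable f) {C : ℝ}
    (hb : ∀ x, |f x| ≤ C) (K : ℤ) (L m : ℕ) (k : ℤ) (l : ℕ) :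
    IntegrableOn (fun x => f x * walsh K L m x) (dyadicI k l) :=
  mb_integrableOn (hm.mul (meas_walsh K L m))
    (C := |C| * |1|) (bdd_mul hb (abs_walsh_le K L m)) k l

lemma avg_nonneg {g : ℝ → ℝ} (hg : ∀ y, 0 ≤ g y) (k : ℤ) (l : ℕ) : 0 ≤ avg k l 0 g := by
  unfold avg
  apply mul_nonneg (by positivity)
  exact setIntegral_nonneg (measurableSet_dyadicI k l)
    fun y _ => mul_nonneg (hg y) (walsh_zero_nonneg k l y)
lemma dyadicI_union (k : ℤ) (l : ℕ) :
    dyadicI k l = dyadicI (k + 1) (2 * l) ∪ dyadicI (k + 1) (2 * l + 1) := by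
  have h2 : (2 : ℝ) ^ (-(k + 1)) = 2 ^ (-k) / 2 := by
    rw [neg_add, zpow_add₀ (two_ne_zero : (2 : ℝ) ≠ 0)]
    norm_num
    ring
  have hp : (0 : ℝ) < 2 ^ (-k) := by positivity
  unfold dyadicI
  push_cast [h2]
  rw [Set.Ico_union_Ico_eq_Ico (by nlinarith) (by nlinarith)]
  congr 1 <;> ring

lemma dyadicI_disj (k : ℤ) (l : ℕ) :
    Disjoint (dyadicI (k + 1) (2 * l)) (dyadicI (k + 1) (2 * l + 1)) := by
  unfold dyadicI
  have h : (2 : ℝ) ^ (-(k + 1)) * ((2 * l : ℕ) + 1) = 2 ^ (-(k + 1)) * ((2 * l + 1 : ℕ)) := by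
    push_cast; ring
  rw [h]
  exact Set.Ico_disjoint_Ico_same

lemma bdigit_mem {k : ℤ} {m : ℕ} {x : ℝ} (hx : x ∈ dyadicI (k + 1) m) :
    bdigit x (-k - 1) = m % 2 := by
  obtain ⟨h1, h2⟩ := hx
  have he : -(k + 1) = -k - 1 := by ring
  rw [he] at h1 h2
  have hp : (0 : ℝ) < (2 : ℝ) ^ (-k - 1) := by positivity
  have hfl : ⌊x / 2 ^ (-k - 1)⌋ = (m : ℤ) := by
    rw [Int.floor_eq_iff]
    constructor
    · rw [le_div_iff₀ hp]
      push_cast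
      nlinarith
    · rw [div_lt_iff₀ hp]
      push_cast
      push_cast at h2
      nlinarith
  unfold bdigit
  rw [hfl, Int.toNat_natCast]

lemma walsh_child {k : ℤ} {l n γ α : ℕ} (hγ : γ < 2) (hα : α < 2) {x : ℝ}
    (hx : x ∈ dyadicI (k + 1) (2 * l + α)) :
    walsh k l (2 * n + γ) x = (-1 : ℝ) ^ (γ * α) * walsh (k + 1) (2 * l + α) n x := by
  have hxp : x ∈ dyadicI k l := by
    rw [dyadicI_union k l]
    interval_cases α
    · exact Or.inl (by simpa using hx)
    · exact Or.inr hx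
  unfold walsh
  rw [Set.indicator_of_mem hxp, Set.indicator_of_mem hx, ← pow_add]
  congr 1
  -- exponent identity in ℕ
  have hd0 : bdigit x (-(0 : ℕ) - k - 1) = α := by
    have h := bdigit_mem hx
    have he : (-(0 : ℕ) : ℤ) - k - 1 = -k - 1 := by push_cast; ring
    rw [he, h]
    omega
  have hshift : ∀ j : ℕ, bdigit x (-(j : ℤ) - (k + 1) - 1) = bdigit x (-((j + 1 : ℕ) : ℤ) - k - 1) := by
    intro j
    congr 1
    push_cast
    ring
  have htb0 : (Nat.testBit (2 * n + γ) 0).toNat = γ := by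
    rw [Nat.testBit_zero]
    interval_cases γ <;> simp <;> omega
  have htbs : ∀ j : ℕ, Nat.testBit (2 * n + γ) (j + 1) = Nat.testBit n j := by
    intro j
    rw [Nat.testBit_add_one]
    congr 1
    omega
  have hvan : ∀ j, n ≤ j → Nat.testBit n j = false := fun j hj =>
    Nat.testBit_eq_false_of_lt
      (lt_of_lt_of_le (Nat.lt_two_pow_self (n := n)) (Nat.pow_le_pow_right (by norm_num) hj))
  set d : ℕ → ℕ := fun j => bdigit x (-(j : ℤ) - k - 1) with hd
  have hsum : ∀ N : ℕ, n ≤ N →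
      ∑ j ∈ Finset.range N, (Nat.testBit n j).toNat * d (j + 1)
        = ∑ j ∈ Finset.range (3 * n + 2), (Nat.testBit n j).toNat * d (j + 1) := by
    intro N hN
    rcases le_total N (3 * n + 2) with hle | hle
    · exact Finset.sum_subset (Finset.range_subset_range.2 hle) (fun j _ hj => by
        rw [hvan j (by simp only [Finset.mem_range, not_lt] at hj; omega)]
        simp)
    · exact (Finset.sum_subset (Finset.range_subset_range.2 hle) (fun j _ hj => by
        rw [hvan j (by simp only [Finset.mem_range, not_lt] at hj; omega)]
        simp)).symm
  calc ∑ j ∈ Finset.range (2 * n + γ + 1), (Nat.testBit (2 * n + γ) j).toNat * d j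
      = (∑ j ∈ Finset.range (2 * n + γ), (Nat.testBit (2 * n + γ) (j + 1)).toNat * d (j + 1))
          + (Nat.testBit (2 * n + γ) 0).toNat * d 0 := Finset.sum_range_succ' _ _
    _ = (∑ j ∈ Finset.range (2 * n + γ), (Nat.testBit n j).toNat * d (j + 1)) + γ * α := by
        rw [htb0]
        congr 1
        · exact Finset.sum_congr rfl fun j _ => by rw [htbs j]
        · rw [show d 0 = α from hd0]
    _ = (∑ j ∈ Finset.range (n + 1), (Nat.testBit n j).toNat * d (j + 1)) + γ * α := by
        rw [hsum (2 * n + γ) (by omega), hsum (n + 1) (by omega)]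
    _ = γ * α + ∑ j ∈ Finset.range (n + 1), (Nat.testBit n j).toNat * bdigit x (-(j : ℤ) - (k + 1) - 1) := by
        rw [Nat.add_comm]
        congr 1
        exact Finset.sum_congr rfl fun j _ => by rw [hshift j]
lemma avg_split {f : ℝ → ℝ} (hm : Measurable f) {C : ℝ} (hb : ∀ x, |f x| ≤ C)
    (k : ℤ) (l n γ : ℕ) (hγ : γ < 2) :
    avg k l (2 * n + γ) f
      = (avg (k + 1) (2 * l) n f + (-1 : ℝ) ^ γ * avg (k + 1) (2 * l + 1) n f) / 2 := by
  unfold avg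
  rw [dyadicI_union k l,
    setIntegral_union (dyadicI_disj k l) (measurableSet_dyadicI _ _)
      (mb_mul_walsh_integrableOn hm hb _ _ _ _ _)
      (mb_mul_walsh_integrableOn hm hb _ _ _ _ _)]
  have h0 : ∫ x in dyadicI (k + 1) (2 * l), f x * walsh k l (2 * n + γ) x
      = ∫ x in dyadicI (k + 1) (2 * l), f x * walsh (k + 1) (2 * l) n x := by
    refine setIntegral_congr_fun (measurableSet_dyadicI _ _) (fun x hx => ?_)
    have hw := walsh_child (l := l) (n := n) hγ (show (0:ℕ) < 2 by norm_num)
      (x := x) (by simpa using hx)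
    simp only [Nat.mul_zero, Nat.add_zero, pow_zero, one_mul] at hw
    rw [hw]
  have h1 : ∫ x in dyadicI (k + 1) (2 * l + 1), f x * walsh k l (2 * n + γ) x
      = (-1 : ℝ) ^ γ * ∫ x in dyadicI (k + 1) (2 * l + 1), f x * walsh (k + 1) (2 * l + 1) n x := by
    rw [← MeasureTheory.integral_const_mul]
    refine setIntegral_congr_fun (measurableSet_dyadicI _ _) (fun x hx => ?_)
    have hw := walsh_child (l := l) (n := n) hγ (show (1:ℕ) < 2 by norm_num) (x := x) hx
    rw [hw]
    ring_nf
  rw [h0, h1]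
  have h2 : (2 : ℝ) ^ (k + 1) = 2 ^ k * 2 := by
    rw [zpow_add_one₀ (two_ne_zero : (2 : ℝ) ≠ 0)]
  rw [h2]
  ring

lemma avg_comb' {f g h : ℝ → ℝ} (hfm : Measurable f) (hgm : Measurable g)
    {Cf Cg : ℝ} (hfb : ∀ x, |f x| ≤ Cf) (hgb : ∀ x, |g x| ≤ Cg) (e e' : ℝ)
    (k : ℤ) (l m : ℕ)
    (hh : ∀ y, h y = ((f y + e * g y) / 2) * ((f y + e' * g y) / 2)) :
    avg k l m h = (avg k l m (fun y => f y ^ 2) + (e * e') * avg k l m (fun y => g y ^ 2)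
        + (e + e') * avg k l m (fun y => f y * g y)) / 4 := by
  unfold avg
  have key : ∀ y, h y * walsh k l m y
      = (1/4) * (f y ^ 2 * walsh k l m y) + ((e * e' / 4) * (g y ^ 2 * walsh k l m y)
          + ((e + e') / 4) * (f y * g y * walsh k l m y)) := fun y => by
    rw [hh y]; ring
  have if2 : IntegrableOn (fun y => f y ^ 2 * walsh k l m y) (dyadicI k l) :=
    mb_mul_walsh_integrableOn (hfm.pow_const 2)
      (C := |Cf| * |Cf|) (fun x => by rw [pow_two]; exact bdd_mul hfb hfb x) _ _ _ _ _
  have ig2 : IntegrableOn (fun y => g y ^ 2 * walsh k l m y) (dyadicI k l) :=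
    mb_mul_walsh_integrableOn (hgm.pow_const 2)
      (C := |Cg| * |Cg|) (fun x => by rw [pow_two]; exact bdd_mul hgb hgb x) _ _ _ _ _
  have ifg : IntegrableOn (fun y => f y * g y * walsh k l m y) (dyadicI k l) :=
    mb_mul_walsh_integrableOn (hfm.mul hgm) (C := |Cf| * |Cg|) (bdd_mul hfb hgb) _ _ _ _ _
  have ih1 : Integrable (fun y => e * e' / 4 * (g y ^ 2 * walsh k l m y)
      + (e + e') / 4 * (f y * g y * walsh k l m y)) (volume.restrict (dyadicI k l)) :=
    (ig2.const_mul _).add (ifg.const_mul _)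
  have ih0 : Integrable (fun y => 1 / 4 * (f y ^ 2 * walsh k l m y))
      (volume.restrict (dyadicI k l)) := if2.const_mul _
  rw [MeasureTheory.integral_congr_ae (Filter.Eventually.of_forall key),
    MeasureTheory.integral_add ih0 ih1,
    MeasureTheory.integral_add (ig2.const_mul _) (ifg.const_mul _),
    MeasureTheory.integral_const_mul, MeasureTheory.integral_const_mul,
    MeasureTheory.integral_const_mul]
  ring
lemma slice_x_mb (F : ℝ → ℝ → ℝ) (hF : IsDyadicStep F) :
    ∃ C, ∀ y, Measurable (fun x => F x y) ∧ ∀ x, |F x y| ≤ C := by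
  obtain ⟨s, c, -, hrep⟩ := hF
  refine ⟨∑ p ∈ s, |c p|, fun y => ⟨?_, fun x => ?_⟩⟩
  · have he : (fun x => F x y) = fun x => ∑ p ∈ s,
        c p * Set.indicator (dyadicI p.1.1 p.1.2) 1 x *
          Set.indicator (dyadicI p.2.1 p.2.2) 1 y := funext fun x => hrep x y
    rw [he]
    exact Finset.measurable_sum _ fun p _ =>
      ((measurable_one.indicator (measurableSet_dyadicI _ _)).const_mul (c p)).mul_const _
  · rw [hrep x y]
    refine le_trans (Finset.abs_sum_le_sum_abs _ _) (Finset.sum_le_sum fun p _ => ?_)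
    rw [abs_mul, abs_mul]
    have h1 := abs_ind_le (dyadicI p.1.1 p.1.2) x
    have h2 := abs_ind_le (dyadicI p.2.1 p.2.2) y
    have h3 := abs_nonneg (c p)
    have h4 := abs_nonneg (Set.indicator (dyadicI p.1.1 p.1.2) (1 : ℝ → ℝ) x)
    have h5 := abs_nonneg (Set.indicator (dyadicI p.2.1 p.2.2) (1 : ℝ → ℝ) y)
    have h6 := mul_le_mul (mul_le_mul (le_refl |c p|) h1 h4 h3) h2 h5
      (by positivity : (0:ℝ) ≤ |c p| * 1)
    linarith

lemma slice_y_mb (F : ℝ → ℝ → ℝ) (hF : IsDyadicStep F) (k : ℤ) (l m : ℕ) :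
    Measurable (fun y => avg k l m fun x => F x y) ∧
      ∃ C, ∀ y, |avg k l m fun x => F x y| ≤ C := by
  obtain ⟨s, c, -, hrep⟩ := hF
  have key : ∀ y, avg k l m (fun x => F x y)
      = ∑ p ∈ s, (c p * avg k l m fun x => Set.indicator (dyadicI p.1.1 p.1.2) 1 x)
          * Set.indicator (dyadicI p.2.1 p.2.2) 1 y := by
    intro y
    unfold avg
    have e1 : ∀ x, F x y * walsh k l m x = ∑ p ∈ s,
        (c p * Set.indicator (dyadicI p.2.1 p.2.2) 1 y)
          * (Set.indicator (dyadicI p.1.1 p.1.2) 1 x * walsh k l m x) := by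
      intro x
      rw [hrep x y, Finset.sum_mul]
      exact Finset.sum_congr rfl fun p _ => by ring
    rw [MeasureTheory.integral_congr_ae (Filter.Eventually.of_forall e1),
        MeasureTheory.integral_finset_sum]
    · rw [Finset.mul_sum]
      refine Finset.sum_congr rfl fun p _ => ?_
      rw [MeasureTheory.integral_const_mul]
      ring
    · intro p _
      exact Integrable.const_mul
        (mb_mul_walsh_integrableOn (measurable_one.indicator (measurableSet_dyadicI _ _))
          (fun x => abs_ind_le _ x) k l m k l) _
  constructor
  · rw [show (fun y => avg k l m fun x => F x y) = _ from funext key]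
    exact Finset.measurable_sum _ fun p _ =>
      (measurable_one.indicator (measurableSet_dyadicI _ _)).const_mul _
  · refine ⟨∑ p ∈ s, |c p * avg k l m fun x => Set.indicator (dyadicI p.1.1 p.1.2) 1 x|,
      fun y => ?_⟩
    rw [key y]
    refine le_trans (Finset.abs_sum_le_sum_abs _ _) (Finset.sum_le_sum fun p _ => ?_)
    rw [abs_mul]
    have h2 := abs_ind_le (dyadicI p.2.1 p.2.2) y
    have h3 := abs_nonneg (c p * avg k l m fun x => Set.indicator (dyadicI p.1.1 p.1.2) 1 x)
    have h6 := mul_le_mul (le_refl |c p * avg k l m fun x => Set.indicator (dyadicI p.1.1 p.1.2) 1 x|) h2 (abs_nonneg _) h3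
    linarith
set_option maxHeartbeats 2000000 in
theorem box_B4 (F₂ : ℝ → ℝ → ℝ) (hF₂ : IsDyadicStep F₂) (k : ℤ) (l₁ l₂ n : ℕ) :
    (1 / 4) * (∑ α ∈ Finset.range 2, ∑ β ∈ Finset.range 2,
        B4 F₂ (k + 1) (2 * l₁ + α) (2 * l₂ + β) n)
      - (∑ γ ∈ Finset.range 2, B4 F₂ k l₁ l₂ (2 * n + γ))
    = (∑ β ∈ Finset.range 2, ∏ γ ∈ Finset.range 2,
        avg (k + 1) (2 * l₂ + β) 0 (fun y => (avg k l₁ (2 * n + γ) (fun x => F₂ x y)) ^ 2))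
      + (∑ γ ∈ Finset.range 2,
        (avg k l₂ 1 (fun y => (avg k l₁ (2 * n + γ) (fun x => F₂ x y)) ^ 2)) ^ 2)
      + 4 * ∑ ε ∈ Finset.range 2,
        (avg k l₂ ε (fun y =>
          avg k l₁ (2 * n) (fun x => F₂ x y) * avg k l₁ (2 * n + 1) (fun x => F₂ x y))) ^ 2 ∧
    0 ≤ (1 / 4) * (∑ α ∈ Finset.range 2, ∑ β ∈ Finset.range 2,
        B4 F₂ (k + 1) (2 * l₁ + α) (2 * l₂ + β) n)
      - (∑ γ ∈ Finset.range 2, B4 F₂ k l₁ l₂ (2 * n + γ)) := by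
  obtain ⟨Cx, hsx⟩ := slice_x_mb F₂ hF₂
  obtain ⟨hm0, C0, hb0⟩ := slice_y_mb F₂ hF₂ (k + 1) (2 * l₁) n
  obtain ⟨hm1, C1, hb1⟩ := slice_y_mb F₂ hF₂ (k + 1) (2 * l₁ + 1) n
  obtain ⟨hm2, C2, hb2⟩ := slice_y_mb F₂ hF₂ k l₁ (2 * n)
  obtain ⟨hm3, C3, hb3⟩ := slice_y_mb F₂ hF₂ k l₁ (2 * n + 1)
  -- splitting of the inner (x-)average
  have hx0 : ∀ y : ℝ, avg k l₁ (2 * n) (fun x => F₂ x y) = (avg (k + 1) (2 * l₁) n (fun x => F₂ x y) + avg (k + 1) (2 * l₁ + 1) n (fun x => F₂ x y)) / 2 := by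
    intro y
    have h := avg_split (hsx y).1 (hsx y).2 k l₁ n 0 (by norm_num)
    norm_num at h
    linarith [h]
  have hx1 : ∀ y : ℝ, avg k l₁ (2 * n + 1) (fun x => F₂ x y) = (avg (k + 1) (2 * l₁) n (fun x => F₂ x y) - avg (k + 1) (2 * l₁ + 1) n (fun x => F₂ x y)) / 2 := by
    intro y
    have h := avg_split (hsx y).1 (hsx y).2 k l₁ n 1 (by norm_num)
    norm_num at h
    linarith [h]
  -- pointwise product expansions
  have hpt0 : ∀ y : ℝ, (avg k l₁ (2 * n) (fun x => F₂ x y)) ^ 2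
      = ((avg (k + 1) (2 * l₁) n (fun x => F₂ x y) + 1 * (avg (k + 1) (2 * l₁ + 1) n (fun x => F₂ x y))) / 2) * ((avg (k + 1) (2 * l₁) n (fun x => F₂ x y) + 1 * (avg (k + 1) (2 * l₁ + 1) n (fun x => F₂ x y))) / 2) := by
    intro y; rw [hx0 y]; ring
  have hpt1 : ∀ y : ℝ, (avg k l₁ (2 * n + 1) (fun x => F₂ x y)) ^ 2
      = ((avg (k + 1) (2 * l₁) n (fun x => F₂ x y) + (-1) * (avg (k + 1) (2 * l₁ + 1) n (fun x => F₂ x y))) / 2) * ((avg (k + 1) (2 * l₁) n (fun x => F₂ x y) + (-1) * (avg (k + 1) (2 * l₁ + 1) n (fun x => F₂ x y))) / 2) := by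
    intro y; rw [hx1 y]; ring
  have hptt : ∀ y : ℝ, avg k l₁ (2 * n) (fun x => F₂ x y) * avg k l₁ (2 * n + 1) (fun x => F₂ x y)
      = ((avg (k + 1) (2 * l₁) n (fun x => F₂ x y) + 1 * (avg (k + 1) (2 * l₁ + 1) n (fun x => F₂ x y))) / 2) * ((avg (k + 1) (2 * l₁) n (fun x => F₂ x y) + (-1) * (avg (k + 1) (2 * l₁ + 1) n (fun x => F₂ x y))) / 2) := by
    intro y; rw [hx0 y, hx1 y]; ring
  -- measurability and boundedness of the composed y-functions
  have hms0 : Measurable (fun y => (avg k l₁ (2 * n) (fun x => F₂ x y)) ^ 2) := hm2.pow_const 2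
  have hms1 : Measurable (fun y => (avg k l₁ (2 * n + 1) (fun x => F₂ x y)) ^ 2) := hm3.pow_const 2
  have hmt : Measurable (fun y => avg k l₁ (2 * n) (fun x => F₂ x y) * avg k l₁ (2 * n + 1) (fun x => F₂ x y)) := hm2.mul hm3
  have hbs0 : ∀ y : ℝ, |(avg k l₁ (2 * n) (fun x => F₂ x y)) ^ 2| ≤ |C2| * |C2| := fun y => by
    rw [pow_two]; exact bdd_mul hb2 hb2 y
  have hbs1 : ∀ y : ℝ, |(avg k l₁ (2 * n + 1) (fun x => F₂ x y)) ^ 2| ≤ |C3| * |C3| := fun y => by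
    rw [pow_two]; exact bdd_mul hb3 hb3 y
  have hbt : ∀ y : ℝ, |avg k l₁ (2 * n) (fun x => F₂ x y) * avg k l₁ (2 * n + 1) (fun x => F₂ x y)| ≤ |C2| * |C3| := fun y => bdd_mul hb2 hb3 y
  have Cs00 : avg (k + 1) (2 * l₂) 0 (fun y => (avg k l₁ (2 * n) (fun x => F₂ x y)) ^ 2) = (avg (k + 1) (2 * l₂) 0 (fun y => (avg (k + 1) (2 * l₁) n (fun x => F₂ x y)) ^ 2) + avg (k + 1) (2 * l₂) 0 (fun y => (avg (k + 1) (2 * l₁ + 1) n (fun x => F₂ x y)) ^ 2) + 2 * (avg (k + 1) (2 * l₂) 0 (fun y => avg (k + 1) (2 * l₁) n (fun x => F₂ x y) * avg (k + 1) (2 * l₁ + 1) n (fun x => F₂ x y)))) / 4 := by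
    have h := avg_comb' (f := (fun y => avg (k + 1) (2 * l₁) n (fun x => F₂ x y))) (g := (fun y => avg (k + 1) (2 * l₁ + 1) n (fun x => F₂ x y))) hm0 hm1 hb0 hb1 1 1 (k + 1) (2 * l₂) 0 hpt0
    beta_reduce at h
    linarith [h]
  have Cs01 : avg (k + 1) (2 * l₂ + 1) 0 (fun y => (avg k l₁ (2 * n) (fun x => F₂ x y)) ^ 2) = (avg (k + 1) (2 * l₂ + 1) 0 (fun y => (avg (k + 1) (2 * l₁) n (fun x => F₂ x y)) ^ 2) + avg (k + 1) (2 * l₂ + 1) 0 (fun y => (avg (k + 1) (2 * l₁ + 1) n (fun x => F₂ x y)) ^ 2) + 2 * (avg (k + 1) (2 * l₂ + 1) 0 (fun y => avg (k + 1) (2 * l₁) n (fun x => F₂ x y) * avg (k + 1) (2 * l₁ + 1) n (fun x => F₂ x y)))) / 4 := by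
    have h := avg_comb' (f := (fun y => avg (k + 1) (2 * l₁) n (fun x => F₂ x y))) (g := (fun y => avg (k + 1) (2 * l₁ + 1) n (fun x => F₂ x y))) hm0 hm1 hb0 hb1 1 1 (k + 1) (2 * l₂ + 1) 0 hpt0
    beta_reduce at h
    linarith [h]
  have Cs10 : avg (k + 1) (2 * l₂) 0 (fun y => (avg k l₁ (2 * n + 1) (fun x => F₂ x y)) ^ 2) = (avg (k + 1) (2 * l₂) 0 (fun y => (avg (k + 1) (2 * l₁) n (fun x => F₂ x y)) ^ 2) + avg (k + 1) (2 * l₂) 0 (fun y => (avg (k + 1) (2 * l₁ + 1) n (fun x => F₂ x y)) ^ 2) - 2 * (avg (k + 1) (2 * l₂) 0 (fun y => avg (k + 1) (2 * l₁) n (fun x => F₂ x y) * avg (k + 1) (2 * l₁ + 1) n (fun x => F₂ x y)))) / 4 := by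
    have h := avg_comb' (f := (fun y => avg (k + 1) (2 * l₁) n (fun x => F₂ x y))) (g := (fun y => avg (k + 1) (2 * l₁ + 1) n (fun x => F₂ x y))) hm0 hm1 hb0 hb1 (-1) (-1) (k + 1) (2 * l₂) 0 hpt1
    beta_reduce at h
    linarith [h]
  have Cs11 : avg (k + 1) (2 * l₂ + 1) 0 (fun y => (avg k l₁ (2 * n + 1) (fun x => F₂ x y)) ^ 2) = (avg (k + 1) (2 * l₂ + 1) 0 (fun y => (avg (k + 1) (2 * l₁) n (fun x => F₂ x y)) ^ 2) + avg (k + 1) (2 * l₂ + 1) 0 (fun y => (avg (k + 1) (2 * l₁ + 1) n (fun x => F₂ x y)) ^ 2) - 2 * (avg (k + 1) (2 * l₂ + 1) 0 (fun y => avg (k + 1) (2 * l₁) n (fun x => F₂ x y) * avg (k + 1) (2 * l₁ + 1) n (fun x => F₂ x y)))) / 4 := by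
    have h := avg_comb' (f := (fun y => avg (k + 1) (2 * l₁) n (fun x => F₂ x y))) (g := (fun y => avg (k + 1) (2 * l₁ + 1) n (fun x => F₂ x y))) hm0 hm1 hb0 hb1 (-1) (-1) (k + 1) (2 * l₂ + 1) 0 hpt1
    beta_reduce at h
    linarith [h]
  have Ct0 : avg (k + 1) (2 * l₂) 0 (fun y => avg k l₁ (2 * n) (fun x => F₂ x y) * avg k l₁ (2 * n + 1) (fun x => F₂ x y)) = (avg (k + 1) (2 * l₂) 0 (fun y => (avg (k + 1) (2 * l₁) n (fun x => F₂ x y)) ^ 2) - avg (k + 1) (2 * l₂) 0 (fun y => (avg (k + 1) (2 * l₁ + 1) n (fun x => F₂ x y)) ^ 2)) / 4 := by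
    have h := avg_comb' (f := (fun y => avg (k + 1) (2 * l₁) n (fun x => F₂ x y))) (g := (fun y => avg (k + 1) (2 * l₁ + 1) n (fun x => F₂ x y))) hm0 hm1 hb0 hb1 1 (-1) (k + 1) (2 * l₂) 0 hptt
    beta_reduce at h
    linarith [h]
  have Ct1 : avg (k + 1) (2 * l₂ + 1) 0 (fun y => avg k l₁ (2 * n) (fun x => F₂ x y) * avg k l₁ (2 * n + 1) (fun x => F₂ x y)) = (avg (k + 1) (2 * l₂ + 1) 0 (fun y => (avg (k + 1) (2 * l₁) n (fun x => F₂ x y)) ^ 2) - avg (k + 1) (2 * l₂ + 1) 0 (fun y => (avg (k + 1) (2 * l₁ + 1) n (fun x => F₂ x y)) ^ 2)) / 4 := by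
    have h := avg_comb' (f := (fun y => avg (k + 1) (2 * l₁) n (fun x => F₂ x y))) (g := (fun y => avg (k + 1) (2 * l₁ + 1) n (fun x => F₂ x y))) hm0 hm1 hb0 hb1 1 (-1) (k + 1) (2 * l₂ + 1) 0 hptt
    beta_reduce at h
    linarith [h]
  have Ms00 : avg k l₂ 0 (fun y => (avg k l₁ (2 * n) (fun x => F₂ x y)) ^ 2) = ((avg (k + 1) (2 * l₂) 0 (fun y => (avg (k + 1) (2 * l₁) n (fun x => F₂ x y)) ^ 2) + avg (k + 1) (2 * l₂) 0 (fun y => (avg (k + 1) (2 * l₁ + 1) n (fun x => F₂ x y)) ^ 2) + 2 * (avg (k + 1) (2 * l₂) 0 (fun y => avg (k + 1) (2 * l₁) n (fun x => F₂ x y) * avg (k + 1) (2 * l₁ + 1) n (fun x => F₂ x y)))) / 4 + ((avg (k + 1) (2 * l₂ + 1) 0 (fun y => (avg (k + 1) (2 * l₁) n (fun x => F₂ x y)) ^ 2) + avg (k + 1) (2 * l₂ + 1) 0 (fun y => (avg (k + 1) (2 * l₁ + 1) n (fun x => F₂ x y)) ^ 2) + 2 * (avg (k + 1) (2 * l₂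 + 1) 0 (fun y => avg (k + 1) (2 * l₁) n (fun x => F₂ x y) * avg (k + 1) (2 * l₁ + 1) n (fun x => F₂ x y)))) / 4)) / 2 := by
    have h := avg_split hms0 hbs0 k l₂ 0 0 (by norm_num)
    norm_num at h
    rw [h, Cs00, Cs01]
    try ring
  have Ms01 : avg k l₂ 1 (fun y => (avg k l₁ (2 * n) (fun x => F₂ x y)) ^ 2) = ((avg (k + 1) (2 * l₂) 0 (fun y => (avg (k + 1) (2 * l₁) n (fun x => F₂ x y)) ^ 2) + avg (k + 1) (2 * l₂) 0 (fun y => (avg (k + 1) (2 * l₁ + 1) n (fun x => F₂ x y)) ^ 2) + 2 * (avg (k + 1) (2 * l₂) 0 (fun y => avg (k + 1) (2 * l₁) n (fun x => F₂ x y) * avg (k + 1) (2 * l₁ + 1) n (fun x => F₂ x y)))) / 4 - ((avg (k + 1) (2 * l₂ + 1) 0 (fun y => (avg (k + 1) (2 * l₁) n (fun x => F₂ x y)) ^ 2) + avg (k + 1) (2 * l₂ + 1) 0 (fun y => (avg (k + 1) (2 * l₁ + 1) n (fun x => F₂ x y)) ^ 2) + 2 * (avg (k + 1) (2 * l₂ +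 1) 0 (fun y => avg (k + 1) (2 * l₁) n (fun x => F₂ x y) * avg (k + 1) (2 * l₁ + 1) n (fun x => F₂ x y)))) / 4)) / 2 := by
    have h := avg_split hms0 hbs0 k l₂ 0 1 (by norm_num)
    norm_num at h
    rw [h, Cs00, Cs01]
    try ring
  have Ms10 : avg k l₂ 0 (fun y => (avg k l₁ (2 * n + 1) (fun x => F₂ x y)) ^ 2) = ((avg (k + 1) (2 * l₂) 0 (fun y => (avg (k + 1) (2 * l₁) n (fun x => F₂ x y)) ^ 2) + avg (k + 1) (2 * l₂) 0 (fun y => (avg (k + 1) (2 * l₁ + 1) n (fun x => F₂ x y)) ^ 2) - 2 * (avg (k + 1) (2 * l₂) 0 (fun y => avg (k + 1) (2 * l₁) n (fun x => F₂ x y) * avg (k + 1) (2 * l₁ + 1) n (fun x => F₂ x y)))) / 4 + ((avg (k + 1) (2 * l₂ + 1) 0 (fun y => (avg (k + 1) (2 * l₁) n (fun x => F₂ x y)) ^ 2) + avg (k + 1) (2 * l₂ + 1) 0 (fun y => (avg (k + 1) (2 * l₁ + 1) n (fun x => F₂ x y)) ^ 2) - 2 * (avg (k + 1) (2 * l₂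 + 1) 0 (fun y => avg (k + 1) (2 * l₁) n (fun x => F₂ x y) * avg (k + 1) (2 * l₁ + 1) n (fun x => F₂ x y)))) / 4)) / 2 := by
    have h := avg_split hms1 hbs1 k l₂ 0 0 (by norm_num)
    norm_num at h
    rw [h, Cs10, Cs11]
    try ring
  have Ms11 : avg k l₂ 1 (fun y => (avg k l₁ (2 * n + 1) (fun x => F₂ x y)) ^ 2) = ((avg (k + 1) (2 * l₂) 0 (fun y => (avg (k + 1) (2 * l₁) n (fun x => F₂ x y)) ^ 2) + avg (k + 1) (2 * l₂) 0 (fun y => (avg (k + 1) (2 * l₁ + 1) n (fun x => F₂ x y)) ^ 2) - 2 * (avg (k + 1) (2 * l₂) 0 (fun y => avg (k + 1) (2 * l₁) n (fun x => F₂ x y) * avg (k + 1) (2 * l₁ + 1) n (fun x => F₂ x y)))) / 4 - ((avg (k + 1) (2 * l₂ + 1) 0 (fun y => (avg (k + 1) (2 * l₁) n (fun x => F₂ x y)) ^ 2) + avg (k + 1) (2 * l₂ + 1) 0 (fun y => (avg (k + 1) (2 * l₁ + 1) n (fun x => F₂ x y)) ^ 2) - 2 * (avg (k + 1) (2 * l₂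 + 1) 0 (fun y => avg (k + 1) (2 * l₁) n (fun x => F₂ x y) * avg (k + 1) (2 * l₁ + 1) n (fun x => F₂ x y)))) / 4)) / 2 := by
    have h := avg_split hms1 hbs1 k l₂ 0 1 (by norm_num)
    norm_num at h
    rw [h, Cs10, Cs11]
    try ring
  have Mt0 : avg k l₂ 0 (fun y => avg k l₁ (2 * n) (fun x => F₂ x y) * avg k l₁ (2 * n + 1) (fun x => F₂ x y)) = ((avg (k + 1) (2 * l₂) 0 (fun y => (avg (k + 1) (2 * l₁) n (fun x => F₂ x y)) ^ 2) - avg (k + 1) (2 * l₂) 0 (fun y => (avg (k + 1) (2 * l₁ + 1) n (fun x => F₂ x y)) ^ 2)) / 4 + ((avg (k + 1) (2 * l₂ + 1) 0 (fun y => (avg (k + 1) (2 * l₁) n (fun x => F₂ x y)) ^ 2) - avg (k + 1) (2 * l₂ + 1) 0 (fun y => (avg (k + 1) (2 * l₁ + 1) n (fun x => F₂ x y)) ^ 2)) / 4)) / 2 := by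
    have h := avg_split hmt hbt k l₂ 0 0 (by norm_num)
    norm_num at h
    rw [h, Ct0, Ct1]
    try ring
  have Mt1 : avg k l₂ 1 (fun y => avg k l₁ (2 * n) (fun x => F₂ x y) * avg k l₁ (2 * n + 1) (fun x => F₂ x y)) = ((avg (k + 1) (2 * l₂) 0 (fun y => (avg (k + 1) (2 * l₁) n (fun x => F₂ x y)) ^ 2) - avg (k + 1) (2 * l₂) 0 (fun y => (avg (k + 1) (2 * l₁ + 1) n (fun x => F₂ x y)) ^ 2)) / 4 - ((avg (k + 1) (2 * l₂ + 1) 0 (fun y => (avg (k + 1) (2 * l₁) n (fun x => F₂ x y)) ^ 2) - avg (k + 1) (2 * l₂ + 1) 0 (fun y => (avg (k + 1) (2 * l₁ + 1) n (fun x => F₂ x y)) ^ 2)) / 4)) / 2 := by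
    have h := avg_split hmt hbt k l₂ 0 1 (by norm_num)
    norm_num at h
    rw [h, Ct0, Ct1]
    try ring
  have hV00 : 0 ≤ (avg (k + 1) (2 * l₂) 0 (fun y => (avg (k + 1) (2 * l₁) n (fun x => F₂ x y)) ^ 2) + avg (k + 1) (2 * l₂) 0 (fun y => (avg (k + 1) (2 * l₁ + 1) n (fun x => F₂ x y)) ^ 2) + 2 * (avg (k + 1) (2 * l₂) 0 (fun y => avg (k + 1) (2 * l₁) n (fun x => F₂ x y) * avg (k + 1) (2 * l₁ + 1) n (fun x => F₂ x y)))) / 4 := by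
    rw [← Cs00]; exact avg_nonneg (fun y => sq_nonneg _) _ _
  have hV01 : 0 ≤ (avg (k + 1) (2 * l₂ + 1) 0 (fun y => (avg (k + 1) (2 * l₁) n (fun x => F₂ x y)) ^ 2) + avg (k + 1) (2 * l₂ + 1) 0 (fun y => (avg (k + 1) (2 * l₁ + 1) n (fun x => F₂ x y)) ^ 2) + 2 * (avg (k + 1) (2 * l₂ + 1) 0 (fun y => avg (k + 1) (2 * l₁) n (fun x => F₂ x y) * avg (k + 1) (2 * l₁ + 1) n (fun x => F₂ x y)))) / 4 := by
    rw [← Cs01]; exact avg_nonneg (fun y => sq_nonneg _) _ _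
  have hV10 : 0 ≤ (avg (k + 1) (2 * l₂) 0 (fun y => (avg (k + 1) (2 * l₁) n (fun x => F₂ x y)) ^ 2) + avg (k + 1) (2 * l₂) 0 (fun y => (avg (k + 1) (2 * l₁ + 1) n (fun x => F₂ x y)) ^ 2) - 2 * (avg (k + 1) (2 * l₂) 0 (fun y => avg (k + 1) (2 * l₁) n (fun x => F₂ x y) * avg (k + 1) (2 * l₁ + 1) n (fun x => F₂ x y)))) / 4 := by
    rw [← Cs10]; exact avg_nonneg (fun y => sq_nonneg _) _ _
  have hV11 : 0 ≤ (avg (k + 1) (2 * l₂ + 1) 0 (fun y => (avg (k + 1) (2 * l₁) n (fun x => F₂ x y)) ^ 2) + avg (k + 1) (2 * l₂ + 1) 0 (fun y => (avg (k + 1) (2 * l₁ + 1) n (fun x => F₂ x y)) ^ 2) - 2 * (avg (k + 1) (2 * l₂ + 1) 0 (fun y => avg (k + 1) (2 * l₁) n (fun x => F₂ x y) * avg (k + 1) (2 * l₁ + 1) n (fun x => F₂ x y)))) / 4 := by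
    rw [← Cs11]; exact avg_nonneg (fun y => sq_nonneg _) _ _
  constructor
  · simp only [Finset.sum_range_succ, Finset.sum_range_zero, Finset.prod_range_succ,
      Finset.prod_range_zero, B4, zero_add, add_zero, one_mul]
    rw [Ms00, Ms01, Ms10, Ms11, Mt0, Mt1, Cs00, Cs01, Cs10, Cs11]
    ring
  · simp only [Finset.sum_range_succ, Finset.sum_range_zero, Finset.prod_range_succ,
      Finset.prod_range_zero, B4, zero_add, add_zero, one_mul]
    rw [Ms00, Ms10]
    nlinarith [mul_nonneg hV00 hV10, mul_nonneg hV01 hV11, hV00, hV01, hV10, hV11,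
      sq_nonneg (((avg (k + 1) (2 * l₂) 0 (fun y => (avg (k + 1) (2 * l₁) n (fun x => F₂ x y)) ^ 2) + avg (k + 1) (2 * l₂) 0 (fun y => (avg (k + 1) (2 * l₁ + 1) n (fun x => F₂ x y)) ^ 2) + 2 * (avg (k + 1) (2 * l₂) 0 (fun y => avg (k + 1) (2 * l₁) n (fun x => F₂ x y) * avg (k + 1) (2 * l₁ + 1) n (fun x => F₂ x y)))) / 4) - ((avg (k + 1) (2 * l₂ + 1) 0 (fun y => (avg (k + 1) (2 * l₁) n (fun x => F₂ x y)) ^ 2) + avg (k + 1) (2 * l₂ + 1) 0 (fun y => (avg (k + 1) (2 * l₁ + 1) n (fun x => F₂ x y)) ^ 2) + 2 * (avg (k + 1) (2 * l₂ + 1) 0 (fun y => avg (k + 1) (2 * l₁) n (fun x => F₂ x y) * avg (k + 1) (2 * l₁ + 1) n (fun x => F₂ x y)))) / 4)),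
      sq_nonneg (((avg (k + 1) (2 * l₂) 0 (fun y => (avg (k + 1) (2 * l₁) n (fun x => F₂ x y)) ^ 2) + avg (k + 1) (2 * l₂) 0 (fun y => (avg (k + 1) (2 * l₁ + 1) n (fun x => F₂ x y)) ^ 2) - 2 * (avg (k + 1) (2 * l₂) 0 (fun y => avg (k + 1) (2 * l₁) n (fun x => F₂ x y) * avg (k + 1) (2 * l₁ + 1) n (fun x => F₂ x y)))) / 4) - ((avg (k + 1) (2 * l₂ + 1) 0 (fun y => (avg (k + 1) (2 * l₁) n (fun x => F₂ x y)) ^ 2) + avg (k + 1) (2 * l₂ + 1) 0 (fun y => (avg (k + 1) (2 * l₁ + 1) n (fun x => F₂ x y)) ^ 2) - 2 * (avg (k + 1) (2 * l₂ + 1) 0 (fun y => avg (k + 1) (2 * l₁) n (fun x => F₂ x y) * avg (k + 1) (2 * l₁ + 1) n (fun x => F₂ x y)))) / 4)),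
      sq_nonneg (((avg (k + 1) (2 * l₂) 0 (fun y => (avg (k + 1) (2 * l₁) n (fun x => F₂ x y)) ^ 2) - avg (k + 1) (2 * l₂) 0 (fun y => (avg (k + 1) (2 * l₁ + 1) n (fun x => F₂ x y)) ^ 2)) / 4) + ((avg (k + 1) (2 * l₂ + 1) 0 (fun y => (avg (k + 1) (2 * l₁) n (fun x => F₂ x y)) ^ 2) - avg (k + 1) (2 * l₂ + 1) 0 (fun y => (avg (k + 1) (2 * l₁ + 1) n (fun x => F₂ x y)) ^ 2)) / 4)),
      sq_nonneg (((avg (k + 1) (2 * l₂) 0 (fun y => (avg (k + 1) (2 * l₁) n (fun x => F₂ x y)) ^ 2) - avg (k + 1) (2 * l₂) 0 (fun y => (avg (k + 1) (2 * l₁ + 1) n (fun x => F₂ x y)) ^ 2)) / 4) - ((avg (k + 1) (2 * l₂ + 1) 0 (fun y => (avg (k + 1) (2 * l₁) n (fun x => F₂ x y)) ^ 2) - avg (k + 1) (2 * l₂ + 1) 0 (fun y => (avg (k + 1) (2 * l₁ + 1) n (fun x => F₂ x y)) ^ 2)) / 4))]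
end
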